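/- arXiv:1010.5706 — 4 statements merged into one kernel-verified Lean document; each statement's English description precedes it below -/
import Mathlib

section
/- Let R, R' be non-negative integer m-vectors and C, C' be non-negative integer n-vectors with |R| = |C| = |R'| = |C'|. If R' dominates R and C' dominates C, then |A_0(R,C)| ≥ |A_0(R',C')|. -/
open Finset

/-- The set of `m × n` zero-one matrices with row sums `R` and column sums `C`. -/
def matA0 {m n : ℕ} (R : Fin m → ℕ) (C : Fin n → ℕ) : Set (Matrix (Fin m) (Fin n) ℕ) :=
  {D | (∀ i j, D i j ≤ 1) ∧ (∀ i, ∑ j, D i j = R i) ∧ (∀ j, ∑ i, D i j = C j)}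

/-- For vectors arranged in non-increasing order, `X` dominates (majorizes) `Y` if every
partial sum of `X` is at least the corresponding partial sum of `Y`, with equal total sums. -/
def Dominates {p : ℕ} (X Y : Fin p → ℕ) : Prop :=
  (∀ k : ℕ, k ≤ p →
    ∑ i ∈ Finset.univ.filter (fun i : Fin p => (i : ℕ) < k), Y i ≤
      ∑ i ∈ Finset.univ.filter (fun i : Fin p => (i : ℕ) < k), X i) ∧
  ∑ i, X i = ∑ i, Y i

lemma sum_eq_card_filter {m : ℕ} (f : Fin m → ℕ) (hf : ∀ i, f i ≤ 1) :
    ∑ i, f i = (univ.filter (fun i => f i = 1)).card := by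
  have h : ∑ i, f i = ∑ i, (if f i = 1 then 1 else 0) := by
    apply Finset.sum_congr rfl
    intro i _
    have := hf i
    by_cases h : f i = 1 <;> simp [h]
    omega
  rw [h, ← Finset.card_filter]

def PhiKL {m n : ℕ} (k l : Fin n) (D : Matrix (Fin m) (Fin n) ℕ) : Matrix (Fin m) (Fin n) ℕ :=
  fun i j => if j = k then 0 else if j = l then D i k + D i l else D i j

def TofKL {m n : ℕ} (k l : Fin n) (D : Matrix (Fin m) (Fin n) ℕ) : Finset (Fin m) :=
  univ.filter (fun i => D i k = 1 ∧ D i l = 0)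

lemma phi_col_eq {m n : ℕ} {k l : Fin n} (hkl : k ≠ l) {D σ : Matrix (Fin m) (Fin n) ℕ}
    (hΦ : PhiKL k l D = σ) : ∀ i, σ i l = D i k + D i l := by
  intro i
  rw [← hΦ]
  simp [PhiKL, if_neg (Ne.symm hkl)]

lemma phi_facts {m n : ℕ} {R : Fin m → ℕ} {C₁ : Fin n → ℕ} {k l : Fin n} (hkl : k ≠ l)
    {D σ : Matrix (Fin m) (Fin n) ℕ} (hD : D ∈ matA0 R C₁) (hΦ : PhiKL k l D = σ) :
    TofKL k l D ⊆ univ.filter (fun i => σ i l = 1) ∧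
    C₁ k = (univ.filter (fun i => σ i l = 2)).card + (TofKL k l D).card ∧
    C₁ l = (univ.filter (fun i => σ i l = 2)).card +
      ((univ.filter (fun i => σ i l = 1)) \ TofKL k l D).card := by
  have hσil := phi_col_eq hkl hΦ
  have hb := hD.1
  refine ⟨?_, ?_, ?_⟩
  · intro i hi
    simp only [TofKL, mem_filter, mem_univ, true_and] at hi
    simp only [mem_filter, mem_univ, true_and, hσil i]
    omega
  · have h1 : C₁ k = (univ.filter (fun i => D i k = 1)).card := by
      rw [← hD.2.2 k]; exact sum_eq_card_filter _ (fun i => hb i k)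
    have h2 : (univ.filter (fun i => D i k = 1)) =
        (univ.filter (fun i => σ i l = 2)) ∪ TofKL k l D := by
      ext i
      simp only [TofKL, mem_filter, mem_union, mem_univ, true_and, hσil i]
      have := hb i k; have := hb i l
      omega
    have h3 : Disjoint (univ.filter (fun i => σ i l = 2)) (TofKL k l D) := by
      rw [Finset.disjoint_left]
      intro i hi1 hi2
      simp only [mem_filter, mem_univ, true_and, hσil i] at hi1
      simp only [TofKL, mem_filter, mem_univ, true_and] at hi2
      omega
    rw [h1, h2, Finset.card_union_of_disjoint h3]
  · have h1 : C₁ l = (univ.filter (fun i => D i l = 1)).card := by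
      rw [← hD.2.2 l]; exact sum_eq_card_filter _ (fun i => hb i l)
    have h2 : (univ.filter (fun i => D i l = 1)) =
        (univ.filter (fun i => σ i l = 2)) ∪
          ((univ.filter (fun i => σ i l = 1)) \ TofKL k l D) := by
      ext i
      simp only [TofKL, mem_filter, mem_union, mem_sdiff, mem_univ, true_and, hσil i]
      have := hb i k; have := hb i l
      omega
    have h3 : Disjoint (univ.filter (fun i => σ i l = 2))
        ((univ.filter (fun i => σ i l = 1)) \ TofKL k l D) := by
      rw [Finset.disjoint_left]
      intro i hi1 hi2
      simp only [mem_filter, mem_univ, true_and] at hi1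
      simp only [mem_sdiff, mem_filter, mem_univ, true_and] at hi2
      omega
    rw [h1, h2, Finset.card_union_of_disjoint h3]

lemma choose_step {a b : ℕ} (h : b < a) : (a + b).choose a ≤ (a + b).choose (a - 1) := by
  have h1 : (a + b).choose a = (a + b).choose b := by
    have := Nat.choose_symm (n := a + b) (k := a) (by omega)
    rw [show a + b - a = b by omega] at this
    omega
  have h2 : (a + b).choose (a - 1) = (a + b).choose (b + 1) := by
    have := Nat.choose_symm (n := a + b) (k := a - 1) (by omega)
    rw [show a + b - (a - 1) = b + 1 by omega] at this
    omega
  have h3 : (a + b).choose b ≤ (a + b).choose (b + 1) := by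
    have key := Nat.choose_succ_right_eq (a + b) b
    have hle : (a + b).choose b * (b + 1) ≤ (a + b).choose (b + 1) * (b + 1) := by
      rw [key, show a + b - b = a by omega]
      exact Nat.mul_le_mul_left _ (by omega)
    exact Nat.le_of_mul_le_mul_right hle (by omega)
  omega

lemma matA0_finite {m n : ℕ} (R : Fin m → ℕ) (C : Fin n → ℕ) : (matA0 R C).Finite := by
  have h : matA0 R C ⊆ Set.pi Set.univ (fun _ : Fin m => Set.pi Set.univ (fun _ : Fin n => Set.Iic 1)) := by
    intro D hD i _ j _
    exact hD.1 i j
  exact Set.Finite.subset (Set.Finite.pi (fun _ => Set.Finite.pi (fun _ => Set.finite_Iic 1))) h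

lemma transfer_step {m n : ℕ} (R : Fin m → ℕ) (C : Fin n → ℕ) (k l : Fin n)
    (hkl : k ≠ l) (hC : C l < C k) :
    (matA0 R C).ncard ≤
      (matA0 R (fun j => if j = k then C k - 1 else if j = l then C l + 1 else C j)).ncard := by
  classical
  set C'' : Fin n → ℕ := fun j => if j = k then C k - 1 else if j = l then C l + 1 else C j with hC''def
  set A : Finset (Matrix (Fin m) (Fin n) ℕ) := (matA0_finite R C).toFinset with hAdef
  set A'' : Finset (Matrix (Fin m) (Fin n) ℕ) := (matA0_finite R C'').toFinset with hA''def
  rw [Set.ncard_eq_toFinset_card _ (matA0_finite R C),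
      Set.ncard_eq_toFinset_card _ (matA0_finite R C'')]
  set Φ := PhiKL (m := m) k l with hΦdef
  set B : Finset (Matrix (Fin m) (Fin n) ℕ) := A.image Φ ∪ A''.image Φ with hB
  rw [Finset.card_eq_sum_card_fiberwise (f := Φ) (t := B)
      (fun D hD => Finset.mem_union_left _ (Finset.mem_image_of_mem _ hD)),
    Finset.card_eq_sum_card_fiberwise (f := Φ) (t := B) (s := A'')
      (fun D hD => Finset.mem_union_right _ (Finset.mem_image_of_mem _ hD))]
  apply Finset.sum_le_sum
  intro σ _
  rcases Finset.eq_empty_or_nonempty (A.filter (fun D => Φ D = σ)) with he | ⟨D₀, hD₀⟩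
  · simp [he]
  simp only [Finset.mem_filter] at hD₀
  have hD₀A : D₀ ∈ matA0 R C := (Set.Finite.mem_toFinset _).mp hD₀.1
  have hΦ0 : PhiKL k l D₀ = σ := hD₀.2
  obtain ⟨hsub₀, hck, hcl⟩ := phi_facts hkl hD₀A hΦ0
  set S : Finset (Fin m) := univ.filter (fun i => σ i l = 1) with hSdef
  set t : ℕ := (univ.filter (fun i => σ i l = 2)).card with htdef
  set a : ℕ := (TofKL k l D₀).card with hadef
  set b : ℕ := (S \ TofKL k l D₀).card with hbdef
  have hsab : S.card = a + b := by
    have h1 : (TofKL k l D₀).card ≤ S.card := Finset.card_le_card hsub₀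
    have h2 := Finset.card_sdiff_of_subset hsub₀
    omega
  have hab : b < a := by omega
  have ha1 : 1 ≤ a := by omega
  -- facts about σ from the witness D₀
  have hσik : ∀ i, σ i k = 0 := by
    intro i; rw [← hΦ0]; simp [PhiKL]
  have hσil : ∀ i, σ i l = D₀ i k + D₀ i l := phi_col_eq hkl hΦ0
  have hσle : ∀ i, σ i l ≤ 2 := by
    intro i; rw [hσil i]; have := hD₀A.1 i k; have := hD₀A.1 i l; omega
  have hσother : ∀ (i : Fin m) (j : Fin n), j ≠ k → j ≠ l → σ i j = D₀ i j := by
    intro i j hjk hjl; rw [← hΦ0]; simp [PhiKL, hjk, hjl]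
  -- Step A : fiber over A injects into subsets of S of size a
  have stepA : (A.filter (fun D => Φ D = σ)).card ≤ (S.powersetCard a).card := by
    apply Finset.card_le_card_of_injOn (TofKL k l)
    · intro D hD
      simp only [Finset.mem_coe, Finset.mem_filter] at hD
      have hDA : D ∈ matA0 R C := (Set.Finite.mem_toFinset _).mp hD.1
      obtain ⟨hsub, hckD, _⟩ := phi_facts hkl hDA hD.2
      rw [Finset.mem_coe, Finset.mem_powersetCard]
      exact ⟨hsub, by omega⟩
    · intro D1 h1 D2 h2 hT
      simp only [Finset.coe_filter, Set.mem_setOf_eq] at h1 h2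
      have hD1 : D1 ∈ matA0 R C := (Set.Finite.mem_toFinset _).mp h1.1
      have hD2 : D2 ∈ matA0 R C := (Set.Finite.mem_toFinset _).mp h2.1
      have hσ1 := phi_col_eq hkl h1.2
      have hσ2 := phi_col_eq hkl h2.2
      funext i j
      have hmT : (D1 i k = 1 ∧ D1 i l = 0) ↔ (D2 i k = 1 ∧ D2 i l = 0) := by
        have := Finset.ext_iff.mp hT i
        simpa [TofKL] using this
      have b1k := hD1.1 i k; have b1l := hD1.1 i l
      have b2k := hD2.1 i k; have b2l := hD2.1 i l
      have hsum : D1 i k + D1 i l = D2 i k + D2 i l := by rw [← hσ1 i, ← hσ2 i]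
      by_cases hjk : j = k
      · subst hjk; omega
      by_cases hjl : j = l
      · subst hjl; omega
      have e1 : σ i j = D1 i j := by rw [← h1.2]; simp only [hΦdef]; simp [PhiKL, hjk, hjl]
      have e2 : σ i j = D2 i j := by rw [← h2.2]; simp only [hΦdef]; simp [PhiKL, hjk, hjl]
      omega
  have hnotT : ∀ (T' : Finset (Fin m)), T' ⊆ S → ∀ i ∈ T', σ i l = 1 := by
    intro T' hsub i hi
    have := hsub hi
    simpa [hSdef] using this
  -- Step C : subsets of S of size a-1 inject into the fiber over A''
  set DT : Finset (Fin m) → Matrix (Fin m) (Fin n) ℕ := fun T' i j =>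
    if j = k then (if σ i l = 2 then 1 else if i ∈ T' then 1 else 0)
    else if j = l then (if σ i l = 2 then 1 else if σ i l = 1 ∧ i ∉ T' then 1 else 0)
    else σ i j with hDTdef
  have hsplit : ∀ f : Fin n → ℕ,
      ∑ j, f j = f k + f l + ∑ j ∈ (univ \ ({k, l} : Finset (Fin n))), f j := by
    intro f
    have huniv : (univ : Finset (Fin n)) = insert k (insert l (univ \ ({k, l} : Finset (Fin n)))) := by
      ext j; simp; tauto
    conv_lhs => rw [huniv]
    rw [Finset.sum_insert (by simp [hkl]), Finset.sum_insert (by simp)]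
    ring
  have stepC : (S.powersetCard (a - 1)).card ≤ (A''.filter (fun D => Φ D = σ)).card := by
    apply Finset.card_le_card_of_injOn DT
    · intro T' hT'
      rw [Finset.mem_coe, Finset.mem_powersetCard] at hT'
      obtain ⟨hT'sub, hT'card⟩ := hT'
      have hT'S : ∀ i ∈ T', σ i l = 1 := hnotT T' hT'sub
      have hnotT2 : ∀ i, σ i l = 2 → i ∉ T' := by
        intro i h2 hm
        have := hT'S i hm
        omega
      have hvk : ∀ i, DT T' i k = (if σ i l = 2 then 1 else 0) + (if i ∈ T' then 1 else 0) := by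
        intro i
        by_cases h2 : σ i l = 2
        · simp [hDTdef, h2, hnotT2 i h2]
        · simp [hDTdef, h2]
      have hvl : ∀ i, DT T' i l =
          (if σ i l = 2 then 1 else 0) + (if σ i l = 1 ∧ i ∉ T' then 1 else 0) := by
        intro i
        have hstep : DT T' i l = (if σ i l = 2 then 1 else if σ i l = 1 ∧ i ∉ T' then 1 else 0) := by
          simp [hDTdef, Ne.symm hkl]
        rw [hstep]
        by_cases h2 : σ i l = 2 <;> simp [h2]
      have hpair : ∀ i, DT T' i k + DT T' i l = σ i l := by
        intro i
        rw [hvk i, hvl i]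
        have := hσle i
        by_cases h2 : σ i l = 2
        · simp [h2, hnotT2 i h2]
        by_cases hm : i ∈ T'
        · have h1 := hT'S i hm
          simp [h2, hm, h1]
        · by_cases h1 : σ i l = 1
          · simp [h2, hm, h1]
          · simp [h2, hm, h1]; omega
      have hother : ∀ (i : Fin m) (j : Fin n), j ≠ k → j ≠ l → DT T' i j = D₀ i j := by
        intro i j hjk hjl
        simp only [hDTdef, if_neg hjk, if_neg hjl]
        exact hσother i j hjk hjl
      have hmem : DT T' ∈ matA0 R C'' := by
        refine ⟨?_, ?_, ?_⟩
        · intro i j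
          by_cases hjk : j = k
          · rw [hjk, hvk i]
            by_cases h2 : σ i l = 2
            · simp [h2, hnotT2 i h2]
            · by_cases hm : i ∈ T' <;> simp [h2, hm]
          by_cases hjl : j = l
          · rw [hjl, hvl i]
            by_cases h2 : σ i l = 2
            · simp [h2]
            · by_cases h1 : σ i l = 1 ∧ i ∉ T' <;> simp [h2, h1]
          · rw [hother i j hjk hjl]
            exact hD₀A.1 i j
        · intro i
          rw [hsplit (DT T' i)]
          have hr := hD₀A.2.1 i
          rw [hsplit (D₀ i)] at hr
          have htail : ∑ j ∈ (univ \ ({k, l} : Finset (Fin n))), DT T' i j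
              = ∑ j ∈ (univ \ ({k, l} : Finset (Fin n))), D₀ i j := by
            apply Finset.sum_congr rfl
            intro j hj
            simp only [Finset.mem_sdiff, Finset.mem_insert, Finset.mem_singleton, Finset.mem_univ,
              true_and] at hj
            push_neg at hj
            exact hother i j hj.1 hj.2
          have h1 := hpair i
          have h2 := hσil i
          omega
        · intro j
          by_cases hjk : j = k
          · rw [hjk]
            have hcongr : ∑ i, DT T' i k
                = ∑ i, ((if σ i l = 2 then 1 else 0) + (if i ∈ T' then 1 else 0)) :=
              Finset.sum_congr rfl (fun i _ => hvk i)
            rw [hcongr, Finset.sum_add_distrib, ← Finset.card_filter, ← Finset.card_filter]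
            have hfT : (univ.filter (fun i => i ∈ T')).card = T'.card := by
              rw [Finset.filter_mem_eq_inter, Finset.univ_inter]
            have hC''k : C'' k = C k - 1 := by simp [hC''def]
            rw [hfT, hC''k]
            omega
          by_cases hjl : j = l
          · rw [hjl]
            have hcongr : ∑ i, DT T' i l
                = ∑ i, ((if σ i l = 2 then 1 else 0) + (if σ i l = 1 ∧ i ∉ T' then 1 else 0)) :=
              Finset.sum_congr rfl (fun i _ => hvl i)
            rw [hcongr, Finset.sum_add_distrib, ← Finset.card_filter, ← Finset.card_filter]
            have hfT : (univ.filter (fun i => σ i l = 1 ∧ i ∉ T')) = S \ T' := by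
              ext i
              simp only [Finset.mem_filter, Finset.mem_sdiff, Finset.mem_univ, true_and, hSdef]
            have hcards : (S \ T').card = b + 1 := by
              rw [Finset.card_sdiff_of_subset hT'sub]
              omega
            have hC''l : C'' l = C l + 1 := by simp [hC''def, Ne.symm hkl]
            rw [hfT, hcards, hC''l]
            omega
          · have hcongr : ∑ i, DT T' i j = ∑ i, D₀ i j :=
              Finset.sum_congr rfl (fun i _ => hother i j hjk hjl)
            have hC''j : C'' j = C j := by simp [hC''def, hjk, hjl]
            rw [hcongr, hC''j]
            exact hD₀A.2.2 j
      have hΦDT : Φ (DT T') = σ := by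
        funext i j
        show PhiKL k l (DT T') i j = σ i j
        by_cases hjk : j = k
        · rw [hjk]
          simp only [PhiKL, if_pos rfl]
          exact (hσik i).symm
        by_cases hjl : j = l
        · rw [hjl]
          have hstep : PhiKL k l (DT T') i l = DT T' i k + DT T' i l := by
            simp [PhiKL, Ne.symm hkl]
          rw [hstep]
          exact hpair i
        · simp only [PhiKL, if_neg hjk, if_neg hjl, hDTdef]
      rw [Finset.mem_coe, Finset.mem_filter]
      exact ⟨(Set.Finite.mem_toFinset _).mpr hmem, hΦDT⟩
    · intro T1 h1 T2 h2 heq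
      rw [Finset.mem_coe, Finset.mem_powersetCard] at h1 h2
      have key : ∀ T1 T2 : Finset (Fin m), T1 ⊆ S → DT T1 = DT T2 → ∀ i ∈ T1, i ∈ T2 := by
        intro T1 T2 hsub heq i hi
        have hσ1 : σ i l = 1 := hnotT T1 hsub i hi
        have hik := congrFun (congrFun heq i) k
        simp only [hDTdef] at hik
        simp only [if_pos rfl, hσ1, hi] at hik
        norm_num at hik
        by_cases hm : i ∈ T2
        · exact hm
        · simp [hm] at hik
      ext i
      exact ⟨key T1 T2 h1.1 heq i, key T2 T1 h2.1 heq.symm i⟩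
  calc (A.filter (fun D => Φ D = σ)).card
      ≤ (S.powersetCard a).card := stepA
    _ = (S.card).choose a := Finset.card_powersetCard a S
    _ ≤ (S.card).choose (a - 1) := by rw [hsab]; exact choose_step hab
    _ = (S.powersetCard (a - 1)).card := (Finset.card_powersetCard (a - 1) S).symm
    _ ≤ (A''.filter (fun D => Φ D = σ)).card := stepC

def Pref {p : ℕ} (X : Fin p → ℕ) (k : ℕ) : ℕ :=
  ∑ i ∈ Finset.univ.filter (fun i : Fin p => (i : ℕ) < k), X i

lemma Pref_zero {p : ℕ} (X : Fin p → ℕ) : Pref X 0 = 0 := by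
  simp [Pref]

lemma Pref_succ {p : ℕ} (X : Fin p → ℕ) {k : ℕ} (h : k < p) :
    Pref X (k + 1) = Pref X k + X ⟨k, h⟩ := by
  have hins : (univ.filter (fun i : Fin p => (i : ℕ) < k + 1))
      = insert ⟨k, h⟩ (univ.filter (fun i : Fin p => (i : ℕ) < k)) := by
    ext u
    simp only [mem_filter, mem_insert, mem_univ, true_and, Fin.ext_iff]
    omega
  rw [Pref, hins, Finset.sum_insert (by simp)]
  rw [Pref]
  ring

lemma Pref_all {p : ℕ} (X : Fin p → ℕ) {k : ℕ} (h : p ≤ k) : Pref X k = ∑ i, X i := by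
  rw [Pref]
  apply Finset.sum_congr _ (fun _ _ => rfl)
  ext u
  simp only [mem_filter, mem_univ, true_and]
  exact iff_of_true (lt_of_lt_of_le u.isLt h) trivial

/-- One step of the transfer chain. -/
lemma col_step {n : ℕ} (Y X : Fin n → ℕ) (hY : Antitone Y) (hdom : Dominates X Y)
    (hne : X ≠ Y) :
    ∃ i j : Fin n, i ≠ j ∧ X j < X i ∧
      Dominates (fun u => if u = i then X i - 1 else if u = j then X j + 1 else X u) Y ∧
      (∑ k ∈ Finset.range (n + 1),
        (Pref (fun u => if u = i then X i - 1 else if u = j then X j + 1 else X u) k - Pref Y k)) <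
      (∑ k ∈ Finset.range (n + 1), (Pref X k - Pref Y k)) := by
  obtain ⟨hpre, hsum⟩ := hdom
  have hpre' : ∀ k, k ≤ n → Pref Y k ≤ Pref X k := hpre
  -- the sets of disagreement
  have hne' : ∃ u, X u ≠ Y u := Function.ne_iff.mp hne
  have hiS : (univ.filter (fun u : Fin n => X u ≠ Y u)).Nonempty := by
    obtain ⟨u, hu⟩ := hne'
    exact ⟨u, by simp [hu]⟩
  have hjS : (univ.filter (fun u : Fin n => X u < Y u)).Nonempty := by
    by_contra hcon
    rw [Finset.not_nonempty_iff_eq_empty] at hcon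
    have hle : ∀ u, Y u ≤ X u := by
      intro u
      by_contra hu
      have : u ∈ univ.filter (fun u : Fin n => X u < Y u) := by simp; omega
      simp [hcon] at this
    apply hne
    funext u
    by_contra hu
    have hlt : Y u < X u := lt_of_le_of_ne (hle u) (fun h => hu h.symm)
    have : ∑ v, Y v < ∑ v, X v :=
      Finset.sum_lt_sum (fun v _ => hle v) ⟨u, Finset.mem_univ u, hlt⟩
    omega
  set i : Fin n := (univ.filter (fun u : Fin n => X u ≠ Y u)).min' hiS with hidef
  set j : Fin n := (univ.filter (fun u : Fin n => X u < Y u)).min' hjS with hjdef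
  have hi_mem : X i ≠ Y i := by
    have := Finset.min'_mem _ hiS
    simpa using this
  have hj_mem : X j < Y j := by
    have := Finset.min'_mem _ hjS
    simpa using this
  have hi_min : ∀ u : Fin n, X u ≠ Y u → i ≤ u := by
    intro u hu
    exact Finset.min'_le _ _ (by simpa using hu)
  have hj_min : ∀ u : Fin n, X u < Y u → j ≤ u := by
    intro u hu
    exact Finset.min'_le _ _ (by simpa using hu)
  -- prefixes agree below i
  have hagree : ∀ k : ℕ, k ≤ (i : ℕ) → Pref X k = Pref Y k := by
    intro k
    induction k with
    | zero => intro _; rw [Pref_zero, Pref_zero]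
    | succ k ih =>
      intro hk
      have hkn : k < n := by
        have := i.isLt
        omega
      have hXY : X ⟨k, hkn⟩ = Y ⟨k, hkn⟩ := by
        by_contra hcon
        have := hi_min _ hcon
        rw [Fin.le_def] at this
        simp at this
        omega
      rw [Pref_succ X hkn, Pref_succ Y hkn, ih (by omega), hXY]
  have hin : (i : ℕ) < n := i.isLt
  have hXi : Y i < X i := by
    have h1 := hpre' ((i : ℕ) + 1) (by omega)
    rw [Pref_succ X hin, Pref_succ Y hin] at h1
    have h2 := hagree (i : ℕ) le_rfl
    have h3 : (⟨(i : ℕ), hin⟩ : Fin n) = i := by ext; rfl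
    rw [h3] at h1
    omega
  have hij : i < j := by
    have h1 : i ≤ j := hi_min j (by omega)
    rcases lt_or_eq_of_le h1 with h | h
    · exact h
    · exfalso; rw [h] at hXi; omega
  have hXj : X j < X i := by
    have := hY (le_of_lt hij)
    omega
  have hjn : (j : ℕ) < n := j.isLt
  set X' : Fin n → ℕ := fun u => if u = i then X i - 1 else if u = j then X j + 1 else X u
    with hX'def
  have hXi1 : 1 ≤ X i := by omega
  -- key identity relating prefix sums of X' and X
  have hkey : ∀ F : Finset (Fin n),
      (∑ u ∈ F, X' u) + (if i ∈ F then 1 else 0) =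
      (∑ u ∈ F, X u) + (if j ∈ F then 1 else 0) := by
    intro F
    have h1 : ∑ u ∈ F, (X' u + if u = i then 1 else 0)
        = ∑ u ∈ F, (X u + if u = j then 1 else 0) := by
      apply Finset.sum_congr rfl
      intro u _
      by_cases hui : u = i
      · rw [hui]
        have huj : i ≠ j := ne_of_lt hij
        simp only [hX'def, if_pos rfl, if_neg huj, if_true]
        omega
      by_cases huj : u = j
      · rw [huj]
        have hji : j ≠ i := (ne_of_lt hij).symm
        simp only [hX'def, if_neg hji, if_pos rfl, if_true]
      · simp [hX'def, hui, huj]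
    rw [Finset.sum_add_distrib, Finset.sum_add_distrib,
      Finset.sum_ite_eq' F i (fun _ => 1), Finset.sum_ite_eq' F j (fun _ => 1)] at h1
    exact h1
  have hmemPref : ∀ (k : ℕ) (u : Fin n),
      (u ∈ univ.filter (fun v : Fin n => (v : ℕ) < k)) ↔ (u : ℕ) < k := by
    intro k u; simp
  have hkey' : ∀ k : ℕ,
      Pref X' k + (if (i : ℕ) < k then 1 else 0) = Pref X k + (if (j : ℕ) < k then 1 else 0) := by
    intro k
    have := hkey (univ.filter (fun v : Fin n => (v : ℕ) < k))
    rw [if_congr (hmemPref k i) rfl rfl, if_congr (hmemPref k j) rfl rfl] at this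
    exact this
  have hP'le : ∀ k : ℕ, Pref X' k ≤ Pref X k := by
    intro k
    have := hkey' k
    have hijk : (j : ℕ) < k → (i : ℕ) < k := by
      have := hij
      rw [Fin.lt_def] at this
      omega
    by_cases h1 : (i : ℕ) < k <;> by_cases h2 : (j : ℕ) < k <;>
      simp [h1, h2] at this ⊢ <;> omega
  have hP'eq : ∀ k : ℕ, (k ≤ (i : ℕ) ∨ (j : ℕ) < k) → Pref X' k = Pref X k := by
    intro k hk
    have := hkey' k
    have hijlt : (i : ℕ) < (j : ℕ) := hij
    rcases hk with hk | hk
    · rw [if_neg (by omega), if_neg (by omega)] at this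
      omega
    · rw [if_pos (by omega), if_pos (by omega)] at this
      omega
  have hP'mid : ∀ k : ℕ, (i : ℕ) < k → k ≤ (j : ℕ) → Pref X' k + 1 = Pref X k := by
    intro k h1 h2
    have := hkey' k
    rw [if_pos h1, if_neg (by omega)] at this
    omega
  -- strict domination in the middle range
  have hmid : ∀ d : ℕ, (i : ℕ) + 1 + d ≤ (j : ℕ) → Pref Y ((i : ℕ) + 1 + d) + 1 ≤ Pref X ((i : ℕ) + 1 + d) := by
    intro d
    induction d with
    | zero =>
      intro _
      rw [show (i : ℕ) + 1 + 0 = (i : ℕ) + 1 by omega, Pref_succ X hin, Pref_succ Y hin]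
      have h2 := hagree (i : ℕ) le_rfl
      have h3 : (⟨(i : ℕ), hin⟩ : Fin n) = i := by ext; rfl
      rw [h3]
      omega
    | succ d ih =>
      intro hd
      have hkn : (i : ℕ) + 1 + d < n := by omega
      have ihd := ih (by omega)
      rw [show (i : ℕ) + 1 + (d + 1) = ((i : ℕ) + 1 + d) + 1 by omega,
        Pref_succ X hkn, Pref_succ Y hkn]
      have hge : Y ⟨(i : ℕ) + 1 + d, hkn⟩ ≤ X ⟨(i : ℕ) + 1 + d, hkn⟩ := by
        by_contra hcon
        push_neg at hcon
        have := hj_min _ hcon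
        rw [Fin.le_def] at this
        simp at this
        omega
      omega
  refine ⟨i, j, ne_of_lt hij, hXj, ⟨?_, ?_⟩, ?_⟩
  · -- Dominates X' Y
    intro k hk
    show Pref Y k ≤ Pref X' k
    by_cases h1 : k ≤ (i : ℕ)
    · rw [hP'eq k (Or.inl h1)]; exact hpre' k hk
    by_cases h2 : (j : ℕ) < k
    · rw [hP'eq k (Or.inr h2)]; exact hpre' k hk
    · push_neg at h1 h2
      have := hP'mid k h1 h2
      have := hmid (k - (i : ℕ) - 1) (by omega)
      rw [show (i : ℕ) + 1 + (k - (i : ℕ) - 1) = k by omega] at this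
      omega
  · -- total sums equal
    show ∑ u, X' u = ∑ u, Y u
    have h1 := hkey (univ : Finset (Fin n))
    simp only [Finset.mem_univ, if_true] at h1
    omega
  · -- measure decreases
    apply Finset.sum_lt_sum
    · intro k _
      show Pref X' k - Pref Y k ≤ Pref X k - Pref Y k
      have := hP'le k
      omega
    · refine ⟨(i : ℕ) + 1, by simp only [Finset.mem_range]; omega, ?_⟩
      show Pref X' ((i : ℕ) + 1) - Pref Y ((i : ℕ) + 1) < Pref X ((i : ℕ) + 1) - Pref Y ((i : ℕ) + 1)
      have h1 := hP'mid ((i : ℕ) + 1) (by omega) (by omega)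
      have h2 := hmid 0 (by omega)
      rw [show (i : ℕ) + 1 + 0 = (i : ℕ) + 1 by omega] at h2
      omega


lemma col_chain_aux {m n : ℕ} (R : Fin m → ℕ) (Y : Fin n → ℕ) (hY : Antitone Y) :
    ∀ (N : ℕ) (X : Fin n → ℕ),
      (∑ k ∈ Finset.range (n + 1), (Pref X k - Pref Y k)) ≤ N →
      Dominates X Y → (matA0 R X).ncard ≤ (matA0 R Y).ncard := by
  intro N
  induction N with
  | zero =>
    intro X hm hdom
    by_cases hne : X = Y
    · rw [hne]
    · obtain ⟨i, j, hij, hXj, hdom', hlt⟩ := col_step Y X hY hdom hne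
      omega
  | succ N ih =>
    intro X hm hdom
    by_cases hne : X = Y
    · rw [hne]
    · obtain ⟨i, j, hij, hXj, hdom', hlt⟩ := col_step Y X hY hdom hne
      calc (matA0 R X).ncard
          ≤ (matA0 R (fun u => if u = i then X i - 1 else if u = j then X j + 1 else X u)).ncard :=
            transfer_step R X i j hij hXj
        _ ≤ (matA0 R Y).ncard := ih _ (by omega) hdom'

lemma ncard_transpose {m n : ℕ} (R : Fin m → ℕ) (C : Fin n → ℕ) :
    (matA0 R C).ncard = (matA0 C R).ncard := by
  have himg : matA0 C R = Matrix.transpose '' matA0 R C := by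
    ext E
    constructor
    · intro hE
      exact ⟨E.transpose, ⟨fun i j => hE.1 j i, fun i => hE.2.2 i, fun j => hE.2.1 j⟩,
        Matrix.transpose_transpose E⟩
    · rintro ⟨D, hD, rfl⟩
      exact ⟨fun i j => hD.1 j i, fun i => hD.2.2 i, fun j => hD.2.1 j⟩
  rw [himg, Set.ncard_image_of_injective _ Matrix.transpose_injective]

theorem stmt6 (m n : ℕ) (R R' : Fin m → ℕ) (C C' : Fin n → ℕ)
    (hRmono : Antitone R) (hR'mono : Antitone R')
    (hCmono : Antitone C) (hC'mono : Antitone C')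
    (hbal : ∑ i, R i = ∑ j, C j) (hbal' : ∑ i, R' i = ∑ j, C' j)
    (hRR' : ∑ i, R i = ∑ i, R' i)
    (hdomR : Dominates R' R) (hdomC : Dominates C' C) :
    (matA0 R' C').ncard ≤ (matA0 R C).ncard := by
  calc (matA0 R' C').ncard
      ≤ (matA0 R' C).ncard := col_chain_aux R' C hCmono _ C' le_rfl hdomC
    _ = (matA0 C R').ncard := ncard_transpose R' C
    _ ≤ (matA0 C R).ncard := col_chain_aux C R hRmono _ R' le_rfl hdomR
    _ = (matA0 R C).ncard := (ncard_transpose R C).symm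
end

section
/- Let R, R' be non-negative integer m-vectors and C, C' be non-negative integer n-vectors with |R| = |C| = |R'| = |C'|. If R' dominates R and C' dominates C, then |A_+(R,C)| ≥ |A_+(R',C')|. -/
open Finset

/-- The set of `m × n` non-negative integer matrices with row sums `R` and column sums `C`. -/
def matAplus {m n : ℕ} (R : Fin m → ℕ) (C : Fin n → ℕ) : Set (Matrix (Fin m) (Fin n) ℕ) :=
  {D | (∀ i, ∑ j, D i j = R i) ∧ (∀ j, ∑ i, D i j = C j)}

/-- symmetric unimodal with support in [0,N], symmetric about N/2 -/
structure SU (f : ℕ → ℕ) (N : ℕ) : Prop where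
  symm : ∀ r, r ≤ N → f r = f (N - r)
  zero : ∀ r, N < r → f r = 0
  mono : ∀ a b, a ≤ b → 2 * b ≤ N → f a ≤ f b

theorem SU.le {f : ℕ → ℕ} {N : ℕ} (h : SU f N) {a b : ℕ} (hab : a ≤ b) (hs : a + b ≤ N) :
    f a ≤ f b := by
  rcases le_or_gt (2 * b) N with h2 | h2
  · exact h.mono a b hab h2
  · have hbN : b ≤ N := le_trans (Nat.le_add_left _ _) hs
    rw [h.symm b hbN]
    exact h.mono a (N - b) (by omega) (by omega)

theorem SU.conv {f : ℕ → ℕ} {N : ℕ} (h : SU f N) (c : ℕ) :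
    SU (fun r => ∑ j ∈ Icc (r - c) r, f j) (N + c) := by
  have step : ∀ r, 2 * (r + 1) ≤ N + c →
      ∑ j ∈ Icc (r - c) r, f j ≤ ∑ j ∈ Icc (r + 1 - c) (r + 1), f j := by
    intro r hr
    rcases lt_or_ge r c with h1 | h1
    · have e1 : r - c = 0 := by omega
      have e2 : r + 1 - c = 0 := by omega
      rw [e1, e2, Finset.sum_Icc_succ_top (by omega)]
      exact Nat.le_add_right _ _
    · have e2 : r + 1 - c = (r - c) + 1 := by omega
      rw [Finset.sum_Icc_succ_top (by omega), e2]
      rw [Finset.Icc_eq_cons_Ioc (by omega : r - c ≤ r), Finset.sum_cons,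
        ← Finset.Icc_add_one_left_eq_Ioc]
      have : f (r - c) ≤ f (r + 1) := h.le (by omega) (by omega)
      omega
  constructor
  · -- symmetry
    intro r hr
    have key : ∀ s, s ≤ N + c → ∑ j ∈ Icc (s - c) s, f j = ∑ j ∈ Icc (s - c) (min s N), f j := by
      intro s hs
      rcases le_or_gt s N with h1 | h1
      · rw [min_eq_left h1]
      · rw [min_eq_right h1.le]
        have hsplit : Icc (s - c) s = Icc (s - c) N ∪ Ioc N s := by
          ext x; simp only [mem_Icc, mem_union, mem_Ioc]; omega
        have hdisj : Disjoint (Icc (s - c) N) (Ioc N s) := by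
          rw [Finset.disjoint_left]
          intro x hx hx'
          simp only [mem_Icc, mem_Ioc] at hx hx'
          omega
        rw [hsplit, Finset.sum_union hdisj]
        have : ∑ j ∈ Ioc N s, f j = 0 := by
          apply Finset.sum_eq_zero
          intro j hj
          simp only [mem_Ioc] at hj
          exact h.zero j (by omega)
        omega
    show ∑ j ∈ Icc (r - c) r, f j = ∑ j ∈ Icc (N + c - r - c) (N + c - r), f j
    rw [key r hr, key (N + c - r) (by omega)]
    have e1 : N + c - r - c = N - r := by omega
    have e2 : min (N + c - r) N = N - (r - c) := by omega
    rw [e1, e2]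
    apply Finset.sum_nbij' (fun j => N - j) (fun j => N - j)
    · intro a ha; simp only [mem_Icc] at *; omega
    · intro a ha; simp only [mem_Icc] at *; omega
    · intro a ha; simp only [mem_Icc] at ha; omega
    · intro a ha; simp only [mem_Icc] at ha; omega
    · intro a ha; simp only [mem_Icc] at ha
      exact h.symm a (by omega)
  · intro r hr
    apply Finset.sum_eq_zero
    intro j hj
    simp only [mem_Icc] at hj
    exact h.zero j (by omega)
  · intro a b hab h2b
    induction b with
    | zero => simp_all
    | succ b ih =>
      rcases Nat.eq_or_lt_of_le hab with rfl | hlt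
      · exact le_rfl
      · exact le_trans (ih (by omega) (by omega)) (step b h2b)

def boxSum {n : ℕ} (c : Fin n → ℕ) (r : ℕ) : Finset (Fin n → ℕ) :=
  (Fintype.piFinset fun j => Finset.range (c j + 1)).filter fun x => ∑ j, x j = r

def gcnt {n : ℕ} (c : Fin n → ℕ) (r : ℕ) : ℕ := (boxSum c r).card

theorem mem_boxSum {n : ℕ} {c : Fin n → ℕ} {r : ℕ} {x : Fin n → ℕ} :
    x ∈ boxSum c r ↔ (∀ j, x j ≤ c j) ∧ ∑ j, x j = r := by
  simp [boxSum, Fintype.mem_piFinset, Nat.lt_succ_iff]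

theorem fiber_card {n : ℕ} (c : Fin (n + 1) → ℕ) (r j : ℕ) (hj : j ∈ Icc (r - c 0) r) :
    ((boxSum c r).filter fun x => ∑ i, Fin.tail x i = j).card = gcnt (Fin.tail c) j := by
  simp only [mem_Icc] at hj
  apply Finset.card_nbij' (fun x => Fin.tail x) (fun y => Fin.cons (r - j) y)
  · intro x hx
    simp only [Finset.mem_coe, mem_filter, mem_boxSum] at hx
    exact mem_boxSum.2 ⟨fun i => hx.1.1 i.succ, hx.2⟩
  · intro y hy
    rw [Finset.mem_coe, mem_boxSum] at hy
    simp only [Finset.mem_coe, mem_filter, mem_boxSum]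
    have htc : Fin.tail ((Fin.cons (r - j) y : Fin (n+1) → ℕ)) = y := by
      funext i; simp [Fin.tail]
    refine ⟨⟨?_, ?_⟩, ?_⟩
    · intro i
      refine Fin.cases ?_ ?_ i
      · simpa using (by omega : r - j ≤ c 0)
      · intro i'
        rw [Fin.cons_succ]
        exact hy.1 i'
    · rw [Fin.sum_univ_succ]
      simp only [Fin.cons_zero, Fin.cons_succ]
      rw [hy.2]; omega
    · rw [htc, hy.2]
  · intro x hx
    simp only [Finset.mem_coe, mem_filter, mem_boxSum] at hx
    have e : ∑ i, Fin.tail x i = ∑ i : Fin n, x i.succ := rfl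
    have hx0 : x 0 + ∑ i, Fin.tail x i = r := by
      rw [e, ← Fin.sum_univ_succ]; exact hx.1.2
    have hrj : r - j = x 0 := by omega
    rw [hrj]; exact Fin.cons_self_tail x
  · intro y _
    funext i; simp [Fin.tail]

theorem gcnt_cons {n : ℕ} (c : Fin (n + 1) → ℕ) (r : ℕ) :
    gcnt c r = ∑ j ∈ Icc (r - c 0) r, gcnt (Fin.tail c) j := by
  have H : ∀ x ∈ boxSum c r, (∑ i, Fin.tail x i) ∈ Icc (r - c 0) r := by
    intro x hx
    rw [mem_boxSum] at hx
    have e : ∑ i, Fin.tail x i = ∑ i : Fin n, x i.succ := rfl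
    have hs : ∑ i, x i = x 0 + ∑ i, Fin.tail x i := by rw [e]; exact Fin.sum_univ_succ x
    have h0 : x 0 ≤ c 0 := hx.1 0
    simp only [mem_Icc]; omega
  rw [show (gcnt c r) = (boxSum c r).card from rfl,
     Finset.card_eq_sum_card_fiberwise H]
  exact Finset.sum_congr rfl fun j hj => fiber_card c r j hj

theorem su_gcnt : ∀ {n : ℕ} (c : Fin n → ℕ), SU (gcnt c) (∑ j, c j) := by
  intro n
  induction n with
  | zero =>
    intro c
    have hg : ∀ r, 0 < r → gcnt c r = 0 := by
      intro r hr
      unfold gcnt boxSum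
      rw [Finset.card_eq_zero, Finset.filter_eq_empty_iff]
      intro x _
      simp only [Finset.univ_eq_empty, Finset.sum_empty]
      omega
    constructor
    · intro r hr
      simp only [Finset.univ_eq_empty, Finset.sum_empty] at hr
      interval_cases r
      rfl
    · intro r hr
      simp only [Finset.univ_eq_empty, Finset.sum_empty] at hr
      exact hg r hr
    · intro a b hab h2b
      simp only [Finset.univ_eq_empty, Finset.sum_empty] at h2b
      have hb : b = 0 := by omega
      subst hb
      have ha : a = 0 := by omega
      subst ha
      exact le_rfl
  | succ n ih =>
    intro c
    have heq : gcnt c = fun r => ∑ j ∈ Icc (r - c 0) r, gcnt (Fin.tail c) j :=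
      funext (gcnt_cons c)
    have hN : ∑ j, c j = (∑ j, Fin.tail c j) + c 0 := by
      rw [Fin.sum_univ_succ]; exact Nat.add_comm _ _
    rw [heq, hN]
    exact (ih (Fin.tail c)).conv (c 0)


def AF {m n : ℕ} (R : Fin m → ℕ) (C : Fin n → ℕ) : Finset (Fin m → Fin n → ℕ) :=
  (Fintype.piFinset fun _ => Fintype.piFinset fun j => Finset.range (C j + 1)).filter
    fun D => (∀ i, ∑ j, D i j = R i) ∧ (∀ j, ∑ i, D i j = C j)

theorem mem_AF {m n : ℕ} {R : Fin m → ℕ} {C : Fin n → ℕ} {D : Fin m → Fin n → ℕ} :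
    D ∈ AF R C ↔ (∀ i, ∑ j, D i j = R i) ∧ (∀ j, ∑ i, D i j = C j) := by
  simp only [AF, mem_filter, Fintype.mem_piFinset, mem_range, Nat.lt_succ_iff,
    and_iff_right_iff_imp]
  intro h i j
  calc D i j ≤ ∑ i', D i' j :=
      Finset.single_le_sum (f := fun i' => D i' j) (fun _ _ => Nat.zero_le _) (mem_univ i)
  _ = C j := h.2 j

def erase2 {m n : ℕ} (a b : Fin m) (D : Fin m → Fin n → ℕ) : Fin m → Fin n → ℕ :=
  fun i j => if i = a ∨ i = b then 0 else D i j

def TT {m n : ℕ} (R : Fin m → ℕ) (C : Fin n → ℕ) (a b : Fin m) :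
    Finset (Fin m → Fin n → ℕ) :=
  (Fintype.piFinset fun _ => Fintype.piFinset fun j => Finset.range (C j + 1)).filter
    fun E => (∀ j, E a j = 0) ∧ (∀ j, E b j = 0) ∧
      (∀ i, i ≠ a → i ≠ b → ∑ j, E i j = R i) ∧ (∀ j, ∑ i, E i j ≤ C j) ∧
      (∑ j, (C j - ∑ i, E i j)) = R a + R b

theorem sum_split {m : ℕ} {a b : Fin m} (hab : a ≠ b) (f : Fin m → ℕ) :
    ∑ i, f i = f a + f b + ∑ i ∈ (univ.erase a).erase b, f i := by
  have h1 : ∑ i ∈ univ.erase a, f i + f a = ∑ i, f i :=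
    Finset.sum_erase_add _ _ (mem_univ a)
  have h2 : ∑ i ∈ (univ.erase a).erase b, f i + f b = ∑ i ∈ univ.erase a, f i :=
    Finset.sum_erase_add _ _ (by simp [hab.symm])
  omega

theorem colRem_erase2 {m n : ℕ} {R : Fin m → ℕ} {C : Fin n → ℕ} {a b : Fin m} (hab : a ≠ b)
    {D : Fin m → Fin n → ℕ} (hD : D ∈ AF R C) (j : Fin n) :
    ∑ i, erase2 a b D i j + (D a j + D b j) = C j := by
  rw [mem_AF] at hD
  have hs : ∑ i, erase2 a b D i j
      = erase2 a b D a j + erase2 a b D b j + ∑ i ∈ (univ.erase a).erase b, erase2 a b D i j :=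
    sum_split hab _
  have hrest : ∑ i ∈ (univ.erase a).erase b, erase2 a b D i j
      = ∑ i ∈ (univ.erase a).erase b, D i j := by
    apply Finset.sum_congr rfl
    intro i hi
    simp only [mem_erase] at hi
    simp [erase2, hi.1, hi.2.1]
  have hD2 : ∑ i, D i j = D a j + D b j + ∑ i ∈ (univ.erase a).erase b, D i j :=
    sum_split hab _
  have hC : ∑ i, D i j = C j := hD.2 j
  have ha : erase2 a b D a j = 0 := by simp [erase2]
  have hb : erase2 a b D b j = 0 := by simp [erase2]
  omega

theorem erase2_mem_TT {m n : ℕ} {R : Fin m → ℕ} {C : Fin n → ℕ} {a b : Fin m} (hab : a ≠ b)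
    {D : Fin m → Fin n → ℕ} (hD : D ∈ AF R C) : erase2 a b D ∈ TT R C a b := by
  have hD' := hD
  rw [mem_AF] at hD'
  have key := fun j => colRem_erase2 hab hD j
  simp only [TT, mem_filter, Fintype.mem_piFinset, mem_range, Nat.lt_succ_iff]
  refine ⟨?_, fun j => by simp [erase2], fun j => by simp [erase2], ?_, ?_, ?_⟩
  · intro i j
    by_cases h : i = a ∨ i = b
    · simp [erase2, h]
    · push_neg at h
      simp only [erase2, if_neg (not_or.mpr h)]
      calc D i j ≤ ∑ i', D i' j :=
        Finset.single_le_sum (f := fun i' => D i' j) (fun _ _ => Nat.zero_le _) (mem_univ i)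
      _ = C j := hD'.2 j
  · intro i hia hib
    rw [← hD'.1 i]
    apply Finset.sum_congr rfl
    intro j _
    simp [erase2, hia, hib]
  · intro j
    have := key j
    omega
  · have h2 : ∀ j, C j - ∑ i, erase2 a b D i j = D a j + D b j := by
      intro j; have := key j; omega
    rw [Finset.sum_congr rfl fun j _ => h2 j, Finset.sum_add_distrib, hD'.1 a, hD'.1 b]


def recon {m n : ℕ} (C : Fin n → ℕ) (a b : Fin m) (E : Fin m → Fin n → ℕ)
    (x : Fin n → ℕ) : Fin m → Fin n → ℕ :=
  fun i j => if i = a then x j else if i = b then (C j - ∑ i', E i' j) - x j else E i j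

theorem fiber_card_AF {m n : ℕ} {R : Fin m → ℕ} {C : Fin n → ℕ} {a b : Fin m} (hab : a ≠ b)
    (E : Fin m → Fin n → ℕ) (hE : E ∈ TT R C a b) :
    ((AF R C).filter fun D => erase2 a b D = E).card
      = gcnt (fun j => C j - ∑ i, E i j) (R a) := by
  have hEmem := hE
  simp only [TT, mem_filter, Fintype.mem_piFinset, mem_range, Nat.lt_succ_iff] at hEmem
  obtain ⟨-, hE1, hE2, hE3, hE4, hE5⟩ := hEmem
  -- key arithmetic for D in the fiber
  have hkey : ∀ D ∈ (AF R C).filter fun D => erase2 a b D = E,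
      ∀ j, ∑ i, E i j + (D a j + D b j) = C j := by
    intro D hD j
    rw [mem_filter] at hD
    have h := colRem_erase2 hab hD.1 j
    rw [hD.2] at h
    exact h
  have hEsplit : ∀ j, ∑ i, E i j = ∑ i ∈ (univ.erase a).erase b, E i j := by
    intro j
    rw [sum_split hab (f := fun i => E i j), hE1 j, hE2 j]
    omega
  apply Finset.card_nbij' (fun D => D a) (recon C a b E)
  · -- forward membership
    intro D hD
    have hk := hkey D hD
    rw [Finset.mem_coe, mem_filter, mem_AF] at hD
    rw [Finset.mem_coe, mem_boxSum]
    constructor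
    · intro j
      beta_reduce
      have := hk j
      omega
    · exact hD.1.1 a
  · -- backward membership
    intro x hx
    rw [Finset.mem_coe, mem_boxSum] at hx
    obtain ⟨hx1, hx2⟩ := hx
    have hrowb : ∑ j, ((C j - ∑ i', E i' j) - x j) = R b := by
      have hadd : ∑ j, (((C j - ∑ i', E i' j) - x j) + x j) = ∑ j, (C j - ∑ i', E i' j) := by
        apply Finset.sum_congr rfl
        intro j _
        have := hx1 j
        omega
      rw [Finset.sum_add_distrib] at hadd
      omega
    have hcol : ∀ j, ∑ i, recon C a b E x i j = C j := by
      intro j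
      rw [sum_split hab (f := fun i => recon C a b E x i j)]
      have ea : recon C a b E x a j = x j := by simp [recon]
      have eb : recon C a b E x b j = (C j - ∑ i', E i' j) - x j := by
        simp [recon, hab.symm]
      have erest : ∑ i ∈ (univ.erase a).erase b, recon C a b E x i j
          = ∑ i ∈ (univ.erase a).erase b, E i j := by
        apply Finset.sum_congr rfl
        intro i hi
        simp only [mem_erase] at hi
        simp [recon, hi.1, hi.2.1]
      rw [ea, eb, erest, ← hEsplit j]
      have := hE4 j
      have := hx1 j
      omega
    rw [Finset.mem_coe, mem_filter, mem_AF]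
    refine ⟨⟨?_, hcol⟩, ?_⟩
    · intro i
      by_cases hia : i = a
      · subst hia
        simp only [recon, if_pos rfl]
        exact hx2
      · by_cases hib : i = b
        · subst hib
          simp only [recon, if_neg hia, if_pos rfl]
          exact hrowb
        · have : ∀ j, recon C a b E x i j = E i j := by
            intro j; simp [recon, hia, hib]
          rw [Finset.sum_congr rfl fun j _ => this j]
          exact hE3 i hia hib
    · funext i j
      by_cases h : i = a ∨ i = b
      · rcases h with rfl | rfl
        · simp [erase2, hE1 j]
        · simp [erase2, hE2 j]
      · push_neg at h
        simp [erase2, recon, h.1, h.2, not_or.mpr h]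
  · -- left inverse
    intro D hD
    have hk := hkey D hD
    rw [Finset.mem_coe, mem_filter] at hD
    funext i j
    by_cases hia : i = a
    · subst hia; simp [recon]
    · by_cases hib : i = b
      · rw [hib]
        have hvb : recon C a b E (D a) b j = (C j - ∑ i', E i' j) - D a j := by
          simp [recon, hab.symm]
        rw [hvb]
        have := hk j
        omega
      · simp only [recon, if_neg hia, if_neg hib]
        rw [← hD.2]
        simp [erase2, hia, hib]
  · -- right inverse
    intro x _
    funext j
    simp [recon]

theorem card_AF_eq_sum {m n : ℕ} (R : Fin m → ℕ) (C : Fin n → ℕ) {a b : Fin m} (hab : a ≠ b) :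
    (AF R C).card = ∑ E ∈ TT R C a b, gcnt (fun j => C j - ∑ i, E i j) (R a) := by
  have H : ∀ D ∈ AF R C, erase2 a b D ∈ TT R C a b := fun D hD => erase2_mem_TT hab hD
  exact (Finset.card_eq_sum_card_fiberwise H).trans
    (Finset.sum_congr rfl fun E hE => fiber_card_AF hab E hE)


theorem transfer_step_s7 {m n : ℕ} (C : Fin n → ℕ) (X X' : Fin m → ℕ) {a b : Fin m} (hab : a ≠ b)
    (hXa : X a = X' a + 1) (hXb : X' b = X b + 1)
    (hoff : ∀ i, i ≠ a → i ≠ b → X i = X' i) (hba : X' b ≤ X' a) :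
    (AF X C).card ≤ (AF X' C).card := by
  rw [card_AF_eq_sum X C hab, card_AF_eq_sum X' C hab]
  have hTT : TT X C a b = TT X' C a b := by
    unfold TT
    apply Finset.filter_congr
    intro E _
    have hsum : X a + X b = X' a + X' b := by omega
    constructor
    · rintro ⟨h1, h2, h3, h4, h5⟩
      exact ⟨h1, h2, fun i hia hib => by rw [← hoff i hia hib]; exact h3 i hia hib,
        h4, by rw [← hsum]; exact h5⟩
    · rintro ⟨h1, h2, h3, h4, h5⟩
      exact ⟨h1, h2, fun i hia hib => by rw [hoff i hia hib]; exact h3 i hia hib,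
        h4, by rw [hsum]; exact h5⟩
  rw [hTT]
  apply Finset.sum_le_sum
  intro E hE
  simp only [TT, mem_filter] at hE
  obtain ⟨-, -, -, -, -, h5⟩ := hE
  set cr : Fin n → ℕ := fun j => C j - ∑ i, E i j with hcr
  have hsu : SU (gcnt cr) (X' a + X' b) := by
    have := su_gcnt cr
    rwa [h5] at this
  have e1 : gcnt cr (X a) = gcnt cr (X' b - 1) := by
    rw [hXa, hsu.symm (X' a + 1) (by omega)]
    congr 1
    omega
  rw [e1]
  exact hsu.le (by omega) (by omega)


def P {m : ℕ} (X : Fin m → ℕ) (k : ℕ) : ℕ :=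
  ∑ i ∈ univ.filter (fun i : Fin m => (i : ℕ) < k), X i

def Phi {m : ℕ} (R X : Fin m → ℕ) : ℕ := ∑ t ∈ Finset.range (m + 1), (P X t - P R t)

theorem sum_split'' {m : ℕ} {a b : Fin m} (hab : a ≠ b) (s : Finset (Fin m))
    (ha : a ∈ s) (hb : b ∈ s) (f : Fin m → ℕ) :
    ∑ i ∈ s, f i = f a + f b + ∑ i ∈ (s.erase a).erase b, f i := by
  have h1 : ∑ i ∈ s.erase a, f i + f a = ∑ i ∈ s, f i := Finset.sum_erase_add _ _ ha
  have h2 : ∑ i ∈ (s.erase a).erase b, f i + f b = ∑ i ∈ s.erase a, f i :=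
    Finset.sum_erase_add _ _ (Finset.mem_erase.2 ⟨hab.symm, hb⟩)
  omega

theorem P_succ {m : ℕ} (X : Fin m → ℕ) (t : Fin m) :
    P X ((t : ℕ) + 1) = P X (t : ℕ) + X t := by
  unfold P
  have hins : univ.filter (fun i : Fin m => (i : ℕ) < (t : ℕ) + 1)
      = insert t (univ.filter fun i : Fin m => (i : ℕ) < (t : ℕ)) := by
    ext i
    simp only [mem_filter, mem_insert, mem_univ, true_and]
    constructor
    · intro h
      rcases Nat.lt_succ_iff_lt_or_eq.1 h with h | h
      · exact Or.inr h
      · exact Or.inl (Fin.ext h)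
    · rintro (rfl | h)
      · omega
      · omega
  rw [hins, Finset.sum_insert (by simp)]
  omega

set_option maxHeartbeats 2000000 in
theorem step_lemma {m : ℕ} (R : Fin m → ℕ) (hR : Antitone R) (X : Fin m → ℕ)
    (hdom : ∀ k ≤ m, P R k ≤ P X k) (htot : ∑ i, X i = ∑ i, R i) (hXR : X ≠ R) :
    ∃ X' : Fin m → ℕ,
      (∀ (n : ℕ) (C : Fin n → ℕ), (AF X C).card ≤ (AF X' C).card) ∧
      (∀ k ≤ m, P R k ≤ P X' k) ∧ (∑ i, X' i = ∑ i, R i) ∧ Phi R X' < Phi R X := by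
  -- the first discrepancy
  have hne : (univ.filter fun i : Fin m => X i ≠ R i).Nonempty := by
    by_contra h
    rw [Finset.not_nonempty_iff_eq_empty, Finset.filter_eq_empty_iff] at h
    exact hXR (funext fun i => by_contra fun hc => h (mem_univ i) hc)
  obtain ⟨a, haa, hmin⟩ : ∃ a : Fin m, X a ≠ R a ∧ ∀ i, X i ≠ R i → a ≤ i := by
    refine ⟨(univ.filter fun i : Fin m => X i ≠ R i).min' hne, ?_, ?_⟩
    · have h := Finset.min'_mem _ hne
      rw [mem_filter] at h
      exact h.2
    · intro i hi
      exact Finset.min'_le _ i (mem_filter.2 ⟨mem_univ i, hi⟩)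
  have hbefore : ∀ i : Fin m, i < a → X i = R i := by
    intro i hi
    by_contra hc
    exact absurd (hmin i hc) (not_le.2 hi)
  have hPa : P R (a : ℕ) = P X (a : ℕ) := by
    apply Finset.sum_congr rfl
    intro i hi
    rw [mem_filter] at hi
    exact (hbefore i (Fin.lt_def.2 hi.2)).symm
  have hXa : R a < X a := by
    have h1 := hdom ((a : ℕ) + 1) (by omega)
    rw [P_succ R a, P_succ X a, ← hPa] at h1
    omega
  -- the first deficiency
  have hlt : (univ.filter fun i : Fin m => X i < R i).Nonempty := by
    by_contra h
    rw [Finset.not_nonempty_iff_eq_empty, Finset.filter_eq_empty_iff] at h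
    have hge : ∀ i ∈ (univ : Finset (Fin m)), R i ≤ X i := fun i _ =>
      not_lt.1 (h (mem_univ i))
    have : ∑ i, R i < ∑ i, X i :=
      Finset.sum_lt_sum hge ⟨a, mem_univ a, hXa⟩
    omega
  obtain ⟨b, hbb, hbmin⟩ : ∃ b : Fin m, X b < R b ∧ ∀ i, X i < R i → b ≤ i := by
    refine ⟨(univ.filter fun i : Fin m => X i < R i).min' hlt, ?_, ?_⟩
    · have h := Finset.min'_mem _ hlt
      rw [mem_filter] at h
      exact h.2
    · intro i hi
      exact Finset.min'_le _ i (mem_filter.2 ⟨mem_univ i, hi⟩)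
  have hab : a < b := by
    have h1 : a ≤ b := hmin b (ne_of_lt hbb)
    rcases lt_or_eq_of_le h1 with h | h
    · exact h
    · exfalso; rw [h] at hXa; omega
  have hmid : ∀ i : Fin m, a < i → i < b → R i ≤ X i := by
    intro i _ hib
    by_contra hc
    exact absurd (hbmin i (not_le.1 hc)) (not_le.2 hib)
  have habv : (a : ℕ) < (b : ℕ) := Fin.lt_def.1 hab
  -- the transferred vector
  set X'' : Fin m → ℕ := fun i => if i = a then X a - 1 else if i = b then X b + 1 else X i
    with hX''
  have hXa'' : X'' a = X a - 1 := by simp [hX'']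
  have hXb'' : X'' b = X b + 1 := by simp [hX'', (ne_of_lt hab).symm]
  have hXoff : ∀ i, i ≠ a → i ≠ b → X'' i = X i := by
    intro i hia hib; simp [hX'', hia, hib]
  -- prefix sum comparisons
  have hstrict : ∀ t : ℕ, (a : ℕ) < t → t ≤ (b : ℕ) → P R t + 1 ≤ P X t := by
    intro t hat htb
    have has : a ∈ univ.filter (fun i : Fin m => (i : ℕ) < t) := by
      simp [hat]
    have e1 := Finset.sum_erase_add (univ.filter (fun i : Fin m => (i : ℕ) < t)) X has
    have e2 := Finset.sum_erase_add (univ.filter (fun i : Fin m => (i : ℕ) < t)) R has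
    have hle : ∑ i ∈ (univ.filter (fun i : Fin m => (i : ℕ) < t)).erase a, R i
        ≤ ∑ i ∈ (univ.filter (fun i : Fin m => (i : ℕ) < t)).erase a, X i := by
      apply Finset.sum_le_sum
      intro i hi
      rw [Finset.mem_erase, mem_filter] at hi
      have hib : i < b := Fin.lt_def.2 (lt_of_lt_of_le hi.2.2 htb)
      rcases lt_or_gt_of_ne (fun h => hi.1 (by exact_mod_cast h) : i ≠ a) with h | h
      · exact le_of_eq (hbefore i h).symm
      · exact hmid i h hib
    unfold P
    omega
  have c1 : ∀ t : ℕ, t ≤ (a : ℕ) → P X'' t = P X t := by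
    intro t hta
    apply Finset.sum_congr rfl
    intro i hi
    rw [mem_filter] at hi
    have hiv : (i : ℕ) < t := hi.2
    have hia : i ≠ a := fun h => by rw [h] at hiv; omega
    have hib : i ≠ b := fun h => by rw [h] at hiv; omega
    exact hXoff i hia hib
  have c2 : ∀ t : ℕ, (a : ℕ) < t → t ≤ (b : ℕ) → P X'' t + 1 = P X t := by
    intro t hat htb
    have has : a ∈ univ.filter (fun i : Fin m => (i : ℕ) < t) := by simp [hat]
    have e1 := Finset.sum_erase_add (univ.filter (fun i : Fin m => (i : ℕ) < t)) X has
    have e2 := Finset.sum_erase_add (univ.filter (fun i : Fin m => (i : ℕ) < t)) X'' has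
    have hcong : ∑ i ∈ (univ.filter (fun i : Fin m => (i : ℕ) < t)).erase a, X'' i
        = ∑ i ∈ (univ.filter (fun i : Fin m => (i : ℕ) < t)).erase a, X i := by
      apply Finset.sum_congr rfl
      intro i hi
      rw [Finset.mem_erase, mem_filter] at hi
      have hib : i ≠ b := fun h => by
        rw [h] at hi
        have := hi.2.2
        omega
      exact hXoff i hi.1 hib
    unfold P
    omega
  have c3 : ∀ t : ℕ, (b : ℕ) < t → P X'' t = P X t := by
    intro t hbt
    have has : a ∈ univ.filter (fun i : Fin m => (i : ℕ) < t) := by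
      simp only [mem_filter, mem_univ, true_and]; omega
    have hbs : b ∈ univ.filter (fun i : Fin m => (i : ℕ) < t) := by
      simp only [mem_filter, mem_univ, true_and]; omega
    have e1 := sum_split'' (ne_of_lt hab) _ has hbs X
    have e2 := sum_split'' (ne_of_lt hab) _ has hbs X''
    have hcong : ∑ i ∈ ((univ.filter (fun i : Fin m => (i : ℕ) < t)).erase a).erase b, X'' i
        = ∑ i ∈ ((univ.filter (fun i : Fin m => (i : ℕ) < t)).erase a).erase b, X i := by
      apply Finset.sum_congr rfl
      intro i hi
      rw [Finset.mem_erase, Finset.mem_erase] at hi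
      exact hXoff i hi.2.1 hi.1
    unfold P
    unfold P at e1 e2
    omega
  refine ⟨X'', ?_, ?_, ?_, ?_⟩
  · -- counting step
    intro n C
    exact transfer_step_s7 C X X'' (ne_of_lt hab) (by omega) (by omega)
      (fun i hia hib => (hXoff i hia hib).symm) (by
        have h1 : R b ≤ R a := hR (le_of_lt hab)
        omega)
  · -- dominance
    intro k hk
    rcases le_or_gt k (a : ℕ) with h | h
    · rw [c1 k h]; exact hdom k hk
    · rcases le_or_gt k (b : ℕ) with h' | h'
      · have := c2 k h h'
        have := hstrict k h h'
        omega
      · rw [c3 k h']; exact hdom k hk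
  · -- total
    have e1 := sum_split'' (ne_of_lt hab) univ (mem_univ a) (mem_univ b) X
    have e2 := sum_split'' (ne_of_lt hab) univ (mem_univ a) (mem_univ b) X''
    have hcong : ∑ i ∈ ((univ : Finset (Fin m)).erase a).erase b, X'' i
        = ∑ i ∈ ((univ : Finset (Fin m)).erase a).erase b, X i := by
      apply Finset.sum_congr rfl
      intro i hi
      rw [Finset.mem_erase, Finset.mem_erase] at hi
      exact hXoff i hi.2.1 hi.1
    omega
  · -- potential decreases
    unfold Phi
    apply Finset.sum_lt_sum
    · intro t _
      rcases le_or_gt t (a : ℕ) with h | h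
      · rw [c1 t h]
      · rcases le_or_gt t (b : ℕ) with h' | h'
        · have := c2 t h h'
          omega
        · rw [c3 t h']
    · refine ⟨(a : ℕ) + 1, ?_, ?_⟩
      · simp only [Finset.mem_range]
        have := a.isLt
        omega
      · have h1 := c2 ((a : ℕ) + 1) (by omega) (by omega)
        have h2 := hstrict ((a : ℕ) + 1) (by omega) (by omega)
        omega

theorem chain {m n : ℕ} (C : Fin n → ℕ) (R : Fin m → ℕ) (hR : Antitone R) :
    ∀ (N : ℕ) (X : Fin m → ℕ), Phi R X ≤ N →
      (∀ k ≤ m, P R k ≤ P X k) → ∑ i, X i = ∑ i, R i →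
      (AF X C).card ≤ (AF R C).card := by
  intro N
  induction N with
  | zero =>
    intro X hphi hdom htot
    by_cases hXR : X = R
    · rw [hXR]
    · obtain ⟨X', -, -, -, hlt⟩ := step_lemma R hR X hdom htot hXR
      omega
  | succ N ih =>
    intro X hphi hdom htot
    by_cases hXR : X = R
    · rw [hXR]
    · obtain ⟨X', hcard, hdom', htot', hlt⟩ := step_lemma R hR X hdom htot hXR
      exact le_trans (hcard n C) (ih X' (by omega) hdom' htot')

theorem AF_transpose {m n : ℕ} (R : Fin m → ℕ) (C : Fin n → ℕ) :
    (AF R C).card = (AF C R).card := by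
  apply Finset.card_nbij' (fun D => fun j i => D i j) (fun D => fun i j => D j i)
  · intro D hD
    rw [Finset.mem_coe, mem_AF] at hD ⊢
    exact ⟨hD.2, hD.1⟩
  · intro D hD
    rw [Finset.mem_coe, mem_AF] at hD ⊢
    exact ⟨hD.2, hD.1⟩
  · intro D _; rfl
  · intro D _; rfl

theorem matAplus_ncard {m n : ℕ} (R : Fin m → ℕ) (C : Fin n → ℕ) :
    (matAplus R C).ncard = (AF R C).card := by
  have h : matAplus R C = ((AF R C : Set (Fin m → Fin n → ℕ)) : Set (Matrix (Fin m) (Fin n) ℕ)) := by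
    ext D
    simp only [matAplus, Set.mem_setOf_eq, Finset.coe_sort_coe, Set.mem_image, Finset.mem_coe]
    exact mem_AF.symm
  rw [h]
  exact Set.ncard_coe_finset _

theorem stmt7 (m n : ℕ) (R R' : Fin m → ℕ) (C C' : Fin n → ℕ)
    (hRmono : Antitone R) (hR'mono : Antitone R')
    (hCmono : Antitone C) (hC'mono : Antitone C')
    (hbal : ∑ i, R i = ∑ j, C j) (hbal' : ∑ i, R' i = ∑ j, C' j)
    (hRR' : ∑ i, R i = ∑ i, R' i)
    (hdomR : Dominates R' R) (hdomC : Dominates C' C) :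
    (matAplus R' C').ncard ≤ (matAplus R C).ncard := by
  rw [matAplus_ncard, matAplus_ncard]
  have step1 : (AF R' C').card ≤ (AF R C').card :=
    chain C' R hRmono (Phi R R') R' le_rfl hdomR.1 hdomR.2
  have step2 : (AF C' R).card ≤ (AF C R).card :=
    chain R C hCmono (Phi C C') C' le_rfl hdomC.1 hdomC.2
  calc (AF R' C').card ≤ (AF R C').card := step1
    _ = (AF C' R).card := AF_transpose R C'
    _ ≤ (AF C R).card := step2
    _ = (AF R C).card := (AF_transpose R C).symm
end

section
/- Let R=(r_1,…,r_m) and C=(c_1,…,c_n) be positive integer vectors with r_1+…+r_m = c_1+…+c_n, and let P_0(R,C) be the polytope of all m×n real matrices X=(x_{ij}) with row sums R, column sums C and 0 ≤ x_{ij} ≤ 1 for all i,j. Suppose P_0(R,C) contains a matrix Y=(y_{ij}) with 0 < y_{ij} < 1 for all i,j. Define h: P_0(R,C) → ℝ by h(X) = Σ_{i,j} [ x_{ij} ln(1/x_{ij}) + (1-x_{ij}) ln(1/(1-x_{ij})) ]. Then h is strictly concave on P_0(R,C), hence attains its maximum at a unique matrix Z_0 = (z_{ij}) (the maximum entropy matrix),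 and moreover: (1) 0 < z_{ij} < 1 for all i,j; (2) the infimum α_0(R,C) of F_0 over positive x,y is attained at some point (x,y); (3) α_0(R,C) = e^{h(Z_0)}. -/
open Finset

/-- `F_0(x, y) = (∏ᵢ xᵢ^{-rᵢ}) (∏ⱼ yⱼ^{-cⱼ}) ∏_{i,j} (1 + xᵢ yⱼ)`. -/
noncomputable def F0 {m n : ℕ} (R : Fin m → ℕ) (C : Fin n → ℕ)
    (x : Fin m → ℝ) (y : Fin n → ℝ) : ℝ :=
  (∏ i, x i ^ (-(R i : ℤ))) * (∏ j, y j ^ (-(C j : ℤ))) * ∏ i, ∏ j, (1 + x i * y j)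

/-- `α_0(R, C) = inf { F_0(x, y) : xᵢ > 0, yⱼ > 0 }`. -/
noncomputable def alpha0 {m n : ℕ} (R : Fin m → ℕ) (C : Fin n → ℕ) : ℝ :=
  sInf {z | ∃ x y, (∀ i, 0 < x i) ∧ (∀ j, 0 < y j) ∧ z = F0 R C x y}

/-- The polytope of `m × n` real matrices with row sums `R`, column sums `C` and
entries in `[0, 1]`. -/
def P0 {m n : ℕ} (R : Fin m → ℕ) (C : Fin n → ℕ) : Set (Matrix (Fin m) (Fin n) ℝ) :=
  {X | (∀ i j, 0 ≤ X i j ∧ X i j ≤ 1) ∧ (∀ i, ∑ j, X i j = R i) ∧ (∀ j, ∑ i, X i j = C j)}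

/-- The entropy `h(X) = Σ_{i,j} [x_{ij} ln(1/x_{ij}) + (1 - x_{ij}) ln(1/(1 - x_{ij}))]`
(with the convention `0 · ln(1/0) = 0`, which holds since `Real.log 0 = 0`). -/
noncomputable def entH {m n : ℕ} (X : Matrix (Fin m) (Fin n) ℝ) : ℝ :=
  ∑ i, ∑ j, (X i j * Real.log (1 / X i j) + (1 - X i j) * Real.log (1 / (1 - X i j)))

lemma entH_eq {m n : ℕ} (X : Matrix (Fin m) (Fin n) ℝ) :
    entH X = ∑ i, ∑ j, Real.binEntropy (X i j) := by
  simp [entH, Real.binEntropy, one_div]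

/-! ### One-variable analytic lemmas -/

lemma key_ineq {t a : ℝ} (ht : 0 < t) (ha0 : 0 ≤ a) (ha1 : a ≤ 1) :
    Real.binEntropy a ≤ Real.log (1 + t) - a * Real.log t := by
  rcases eq_or_lt_of_le ha0 with h0 | h0
  · simp [← h0, Real.binEntropy]
    exact Real.log_nonneg (by linarith)
  rcases eq_or_lt_of_le ha1 with h1 | h1
  · subst h1
    simp only [Real.binEntropy_one]
    have := Real.log_le_log ht (by linarith : t ≤ 1 + t)
    linarith
  have h1a : 0 < 1 - a := by linarith
  have hconc := (strictConcaveOn_log_Ioi.concaveOn).2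
    (Set.mem_Ioi.2 (div_pos ht h0)) (Set.mem_Ioi.2 (by positivity : (0:ℝ) < (1-a)⁻¹))
    (le_of_lt h0) (le_of_lt h1a) (by ring)
  have hcomb : a • (t / a) + (1 - a) • (1 - a)⁻¹ = 1 + t := by
    simp only [smul_eq_mul]
    field_simp [h0.ne', h1a.ne']
    ring
  rw [hcomb] at hconc
  have e1 : Real.log (t / a) = Real.log t - Real.log a := Real.log_div (ne_of_gt ht) (ne_of_gt h0)
  have e2 : Real.log (1 - a)⁻¹ = - Real.log (1 - a) := Real.log_inv _
  rw [Real.binEntropy, Real.log_inv, Real.log_inv]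
  simp only [smul_eq_mul] at hconc
  nlinarith [hconc]

lemma key_eq {z : ℝ} (h0 : 0 < z) (h1 : z < 1) :
    Real.log (1 + z / (1 - z)) - z * Real.log (z / (1 - z)) = Real.binEntropy z := by
  have h1z : 0 < 1 - z := by linarith
  have e0 : 1 + z / (1 - z) = (1 - z)⁻¹ := by field_simp; ring
  rw [e0, Real.log_inv, Real.log_div (ne_of_gt h0) (ne_of_gt h1z),
    Real.binEntropy, Real.log_inv, Real.log_inv]
  ring

/-! ### Convexity / concavity -/

lemma convex_P0 {m n : ℕ} (R : Fin m → ℕ) (C : Fin n → ℕ) : Convex ℝ (P0 R C) := by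
  intro X hX Y hY a b ha hb hab
  obtain ⟨hX1, hX2, hX3⟩ := hX
  obtain ⟨hY1, hY2, hY3⟩ := hY
  refine ⟨fun i j => ?_, fun i => ?_, fun j => ?_⟩
  · have e : (a • X + b • Y) i j = a * X i j + b * Y i j := by
      simp [Matrix.add_apply]
    constructor
    · rw [e]; have := (hX1 i j).1; have := (hY1 i j).1; positivity
    · rw [e]
      have := (hX1 i j).2; have := (hY1 i j).2
      nlinarith
  · simp only [Matrix.add_apply, Matrix.smul_apply, smul_eq_mul, Finset.sum_add_distrib,
      ← Finset.mul_sum, hX2 i, hY2 i]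
    nlinarith
  · simp only [Matrix.add_apply, Matrix.smul_apply, smul_eq_mul, Finset.sum_add_distrib,
      ← Finset.mul_sum, hX3 j, hY3 j]
    nlinarith

lemma strictConcave_entH {m n : ℕ} (R : Fin m → ℕ) (C : Fin n → ℕ) :
    StrictConcaveOn ℝ (P0 R C) (entH (m := m) (n := n)) := by
  refine ⟨convex_P0 R C, fun X hX Y hY hXY a b ha hb hab => ?_⟩
  simp only [entH_eq]
  have hXY' : ∃ i j, X i j ≠ Y i j := by
    by_contra h
    push_neg at h
    exact hXY (by ext i j; exact h i j)
  obtain ⟨i0, j0, hne⟩ := hXY'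
  rw [← Finset.sum_product' (f := fun i j => Real.binEntropy ((a • X + b • Y) i j)),
      ← Finset.sum_product' (f := fun i j => Real.binEntropy (X i j)),
      ← Finset.sum_product' (f := fun i j => Real.binEntropy (Y i j))]
  rw [smul_eq_mul, smul_eq_mul, Finset.mul_sum, Finset.mul_sum, ← Finset.sum_add_distrib]
  refine Finset.sum_lt_sum (fun p _ => ?_) ⟨(i0, j0), Finset.mem_univ _, ?_⟩
  · have e : (a • X + b • Y) p.1 p.2 = a * X p.1 p.2 + b * Y p.1 p.2 := by
      simp [Matrix.add_apply]
    rw [e]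
    rcases eq_or_ne (X p.1 p.2) (Y p.1 p.2) with h | h
    · rw [h]
      have e1 : a * Y p.1 p.2 + b * Y p.1 p.2 = Y p.1 p.2 := by
        rw [← add_mul, hab, one_mul]
      rw [e1]
      have e2 : a * Real.binEntropy (Y p.1 p.2) + b * Real.binEntropy (Y p.1 p.2)
          = Real.binEntropy (Y p.1 p.2) := by rw [← add_mul, hab, one_mul]
      rw [e2]
    · have := Real.strictConcave_binEntropy.2
        (Set.mem_Icc.2 (hX.1 p.1 p.2)) (Set.mem_Icc.2 (hY.1 p.1 p.2)) h ha hb hab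
      simp only [smul_eq_mul] at this
      linarith
  · have e : (a • X + b • Y) i0 j0 = a * X i0 j0 + b * Y i0 j0 := by
      simp [Matrix.add_apply]
    rw [e]
    have := Real.strictConcave_binEntropy.2
      (Set.mem_Icc.2 (hX.1 i0 j0)) (Set.mem_Icc.2 (hY.1 i0 j0)) hne ha hb hab
    simp only [smul_eq_mul] at this
    linarith

/-! ### Compactness and existence of a maximiser -/

lemma continuous_entry {m n : ℕ} (i : Fin m) (j : Fin n) :
    Continuous fun X : Matrix (Fin m) (Fin n) ℝ => X i j :=
  (continuous_apply j).comp (continuous_apply i)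

lemma continuous_entH {m n : ℕ} : Continuous (entH (m := m) (n := n)) := by
  have : (entH (m := m) (n := n)) = fun X => ∑ i, ∑ j, Real.binEntropy (X i j) := by
    funext X; exact entH_eq X
  rw [this]
  exact continuous_finset_sum _ fun i _ => continuous_finset_sum _ fun j _ =>
    Real.binEntropy_continuous.comp (continuous_entry i j)

lemma isCompact_P0 {m n : ℕ} (R : Fin m → ℕ) (C : Fin n → ℕ) : IsCompact (P0 R C) := by
  have hK : IsCompact {X : Matrix (Fin m) (Fin n) ℝ | ∀ i j, X i j ∈ Set.Icc (0:ℝ) 1} := by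
    have : {X : Matrix (Fin m) (Fin n) ℝ | ∀ i j, X i j ∈ Set.Icc (0:ℝ) 1}
        = Set.pi Set.univ (fun _ : Fin m => Set.pi Set.univ fun _ : Fin n => Set.Icc (0:ℝ) 1) := by
      ext X
      constructor
      · intro h i _ j _; exact h i j
      · intro h i j; exact h i (Set.mem_univ i) j (Set.mem_univ j)
    rw [this]
    exact isCompact_univ_pi fun i => isCompact_univ_pi fun j => isCompact_Icc
  have hclosed : IsClosed (P0 R C) := by
    have h1 : IsClosed {X : Matrix (Fin m) (Fin n) ℝ | ∀ i j, 0 ≤ X i j ∧ X i j ≤ 1} := by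
      have : {X : Matrix (Fin m) (Fin n) ℝ | ∀ i j, 0 ≤ X i j ∧ X i j ≤ 1}
          = ⋂ i, ⋂ j, ((fun X : Matrix (Fin m) (Fin n) ℝ => X i j) ⁻¹' Set.Icc 0 1) := by
        ext X; simp [Set.mem_iInter, Set.mem_Icc]
      rw [this]
      exact isClosed_iInter fun i => isClosed_iInter fun j =>
        isClosed_Icc.preimage (continuous_entry i j)
    have h2 : IsClosed {X : Matrix (Fin m) (Fin n) ℝ | ∀ i, ∑ j, X i j = (R i : ℝ)} := by
      have : {X : Matrix (Fin m) (Fin n) ℝ | ∀ i, ∑ j, X i j = (R i : ℝ)}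
          = ⋂ i, {X : Matrix (Fin m) (Fin n) ℝ | ∑ j, X i j = (R i : ℝ)} := by
        ext X; simp [Set.mem_iInter]
      rw [this]
      exact isClosed_iInter fun i =>
        isClosed_eq (continuous_finset_sum _ fun j _ => continuous_entry i j) continuous_const
    have h3 : IsClosed {X : Matrix (Fin m) (Fin n) ℝ | ∀ j, ∑ i, X i j = (C j : ℝ)} := by
      have : {X : Matrix (Fin m) (Fin n) ℝ | ∀ j, ∑ i, X i j = (C j : ℝ)}
          = ⋂ j, {X : Matrix (Fin m) (Fin n) ℝ | ∑ i, X i j = (C j : ℝ)} := by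
        ext X; simp [Set.mem_iInter]
      rw [this]
      exact isClosed_iInter fun j =>
        isClosed_eq (continuous_finset_sum _ fun i _ => continuous_entry i j) continuous_const
    have : P0 R C = _ ∩ (_ ∩ _) := rfl
    exact (h1.inter (h2.inter h3))
  exact hK.of_isClosed_subset hclosed fun X hX i j => Set.mem_Icc.2 (hX.1 i j)

lemma exists_max {m n : ℕ} (R : Fin m → ℕ) (C : Fin n → ℕ) (hne : (P0 R C).Nonempty) :
    ∃ Z0 ∈ P0 R C, ∀ X ∈ P0 R C, entH X ≤ entH Z0 := by
  obtain ⟨Z0, hZ0, hmax⟩ := (isCompact_P0 R C).exists_isMaxOn hne continuous_entH.continuousOn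
  exact ⟨Z0, hZ0, fun X hX => hmax hX⟩

/-! ### Strict maximality and interiority of the maximiser -/

lemma entH_eq2 {m n : ℕ} (X : Matrix (Fin m) (Fin n) ℝ) :
    entH X = ∑ p ∈ Finset.univ ×ˢ Finset.univ, Real.binEntropy (X p.1 p.2) := by
  rw [entH_eq, ← Finset.sum_product']

lemma strict_max {m n : ℕ} (R : Fin m → ℕ) (C : Fin n → ℕ)
    {Z0 : Matrix (Fin m) (Fin n) ℝ} (hZ0 : Z0 ∈ P0 R C)
    (hmax : ∀ X ∈ P0 R C, entH X ≤ entH Z0) :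
    ∀ X ∈ P0 R C, X ≠ Z0 → entH X < entH Z0 := by
  intro X hX hne
  by_contra hcon
  push_neg at hcon
  have hmid : (2⁻¹ : ℝ) • X + (2⁻¹ : ℝ) • Z0 ∈ P0 R C :=
    convex_P0 R C hX hZ0 (by norm_num) (by norm_num) (by norm_num)
  have := (strictConcave_entH R C).2 hX hZ0 hne (by norm_num : (0:ℝ) < 2⁻¹)
    (by norm_num : (0:ℝ) < 2⁻¹) (by norm_num)
  have h2 := hmax _ hmid
  simp only [smul_eq_mul] at this
  linarith

lemma interior_max {m n : ℕ} (R : Fin m → ℕ) (C : Fin n → ℕ)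
    {Y : Matrix (Fin m) (Fin n) ℝ} (hY : Y ∈ P0 R C) (hYint : ∀ i j, 0 < Y i j ∧ Y i j < 1)
    {Z0 : Matrix (Fin m) (Fin n) ℝ} (hZ0 : Z0 ∈ P0 R C)
    (hmax : ∀ X ∈ P0 R C, entH X ≤ entH Z0) :
    ∀ i j, 0 < Z0 i j ∧ Z0 i j < 1 := by
  by_contra hcon
  push_neg at hcon
  obtain ⟨i0, j0, hbad0⟩ := hcon
  have hz01 := hZ0.1 i0 j0
  have hbad : Z0 i0 j0 = 0 ∨ Z0 i0 j0 = 1 := by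
    rcases eq_or_lt_of_le hz01.1 with h | h
    · exact Or.inl h.symm
    · exact Or.inr (le_antisymm hz01.2 (hbad0 h))
  set c : ℝ := min (Y i0 j0) (1 - Y i0 j0) with hc
  have hcpos : 0 < c := lt_min (hYint i0 j0).1 (by linarith [(hYint i0 j0).2])
  set N : ℝ := ((m * n : ℕ) : ℝ) with hN
  set t : ℝ := min (2⁻¹ : ℝ) (Real.exp (-(N * Real.log 2 + 1) / c)) with ht
  have htpos : 0 < t := lt_min (by norm_num) (Real.exp_pos _)
  have ht1 : t < 1 := lt_of_le_of_lt (min_le_left _ _) (by norm_num)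
  have hlogt : Real.log t ≤ -((N * Real.log 2 + 1) / c) := by
    have := Real.log_le_log htpos (min_le_right (2⁻¹ : ℝ) _)
    rw [Real.log_exp, neg_div] at this
    exact this
  set W : Matrix (Fin m) (Fin n) ℝ := (1 - t) • Z0 + t • Y with hW
  have hWmem : W ∈ P0 R C := convex_P0 R C hZ0 hY (by linarith) (le_of_lt htpos) (by ring)
  have hWent : ∀ p q, W p q = (1 - t) * Z0 p q + t * Y p q := by
    intro p q; simp [hW, Matrix.add_apply]
  have hgen : ∀ p q, Real.binEntropy (Z0 p q) - t * Real.log 2 ≤ Real.binEntropy (W p q) := by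
    intro p q
    have hconc := Real.strictConcave_binEntropy.concaveOn.2
      (Set.mem_Icc.2 (hZ0.1 p q)) (Set.mem_Icc.2 (hY.1 p q))
      (by linarith : (0:ℝ) ≤ 1 - t) (le_of_lt htpos) (by ring)
    simp only [smul_eq_mul] at hconc
    rw [hWent]
    have h1 : 0 ≤ Real.binEntropy (Y p q) := Real.binEntropy_nonneg (hY.1 p q).1 (hY.1 p q).2
    have h2 : Real.binEntropy (Z0 p q) ≤ Real.log 2 := Real.binEntropy_le_log_two
    nlinarith
  have hbadlb : c * (t * (-Real.log t)) ≤ Real.binEntropy (W i0 j0) := by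
    have hy0 := (hYint i0 j0).1
    have hy1 := (hYint i0 j0).2
    have key : ∀ s : ℝ, 0 < s → s < 1 → c ≤ s →
        c * (t * (-Real.log t)) ≤ Real.binEntropy (t * s) := by
      intro s hs0 hs1 hcs
      have hts0 : 0 < t * s := by positivity
      have hts1 : t * s < 1 := by nlinarith
      have hlog2 : Real.log (t * s) = Real.log t + Real.log s :=
        Real.log_mul (ne_of_gt htpos) (ne_of_gt hs0)
      have hlogs : Real.log s < 0 := Real.log_neg hs0 hs1
      have hlt0 : Real.log t < 0 := Real.log_neg htpos ht1
      have hterm2 : 0 ≤ (1 - t * s) * Real.log (1 - t * s)⁻¹ := by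
        have : 0 < 1 - t * s := by linarith
        have : 0 ≤ Real.log (1 - t * s)⁻¹ := by
          rw [Real.log_inv]
          have : Real.log (1 - t * s) ≤ 0 := Real.log_nonpos (by linarith) (by linarith)
          linarith
        positivity
      have hterm1 : t * s * (-Real.log t) ≤ t * s * Real.log (t * s)⁻¹ := by
        rw [Real.log_inv, hlog2]
        nlinarith
      rw [Real.binEntropy]
      have hmono : c * (t * -Real.log t) ≤ t * s * -Real.log t := by
        nlinarith [mul_nonneg (mul_nonneg (le_of_lt htpos)
          (by linarith : (0:ℝ) ≤ -Real.log t)) (by linarith : (0:ℝ) ≤ s - c)]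
      nlinarith
    rcases hbad with h | h
    · have : W i0 j0 = t * Y i0 j0 := by rw [hWent, h]; ring
      rw [this]
      exact key _ hy0 hy1 (min_le_left _ _)
    · have : W i0 j0 = 1 - t * (1 - Y i0 j0) := by rw [hWent, h]; ring
      rw [this, ← Real.binEntropy_one_sub]
      have e : 1 - (1 - t * (1 - Y i0 j0)) = t * (1 - Y i0 j0) := by ring
      rw [e]
      exact key _ (by linarith) (by nlinarith) (min_le_right _ _)
  have hbadz : Real.binEntropy (Z0 i0 j0) = 0 := by
    rcases hbad with h | h <;> simp [h]
  have hsum : entH Z0 + t ≤ entH W := by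
    rw [entH_eq2, entH_eq2]
    have hmem : ((i0, j0) : Fin m × Fin n) ∈ Finset.univ ×ˢ Finset.univ := by simp
    rw [← Finset.add_sum_erase _ _ hmem, ← Finset.add_sum_erase _ _ hmem]
    have hE : ∑ p ∈ (Finset.univ ×ˢ Finset.univ).erase (i0, j0),
        (Real.binEntropy (Z0 p.1 p.2) - t * Real.log 2)
        ≤ ∑ p ∈ (Finset.univ ×ˢ Finset.univ).erase (i0, j0),
        Real.binEntropy (W p.1 p.2) :=
      Finset.sum_le_sum fun p _ => hgen p.1 p.2
    rw [Finset.sum_sub_distrib, Finset.sum_const, nsmul_eq_mul] at hE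
    have hcard : (((Finset.univ ×ˢ Finset.univ).erase ((i0, j0) : Fin m × Fin n)).card : ℝ)
        ≤ N := by
      rw [hN]
      exact_mod_cast le_trans (Nat.cast_le.2 (Finset.card_le_card (Finset.erase_subset _ _)))
        (by simp [Finset.card_univ])
    have hgain : Real.binEntropy (Z0 i0 j0) + (N * Real.log 2 + 1) * t
        ≤ Real.binEntropy (W i0 j0) := by
      rw [hbadz, zero_add]
      have h1 : (N * Real.log 2 + 1) / c * c = N * Real.log 2 + 1 := by
        field_simp
      have h2 : (N * Real.log 2 + 1) * t ≤ c * (t * (-Real.log t)) := by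
        have hA : (N * Real.log 2 + 1) / c ≤ -Real.log t := by linarith
        have hcn : 0 ≤ N * Real.log 2 + 1 := by
          have : (0:ℝ) ≤ N := by positivity
          nlinarith [Real.log_pos (by norm_num : (1:ℝ) < 2)]
        calc (N * Real.log 2 + 1) * t = ((N * Real.log 2 + 1) / c * c) * t := by rw [h1]
          _ ≤ (-Real.log t * c) * t := by
              apply mul_le_mul_of_nonneg_right _ (le_of_lt htpos)
              exact mul_le_mul_of_nonneg_right hA (le_of_lt hcpos)
          _ = c * (t * (-Real.log t)) := by ring
      linarith [hbadlb]
    have hlog2pos : 0 < Real.log 2 := Real.log_pos (by norm_num)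
    have hcard2 : (((Finset.univ ×ˢ Finset.univ).erase ((i0, j0) : Fin m × Fin n)).card : ℝ)
        * (t * Real.log 2) ≤ N * (t * Real.log 2) :=
      mul_le_mul_of_nonneg_right hcard (le_of_lt (mul_pos htpos hlog2pos))
    have : N * (t * Real.log 2) = N * Real.log 2 * t := by ring
    linarith
  linarith [hmax W hWmem, htpos]

/-! ### First-order conditions at the maximiser -/

lemma firstorder {m n : ℕ} (R : Fin m → ℕ) (C : Fin n → ℕ)
    {Z0 : Matrix (Fin m) (Fin n) ℝ} (hZ0 : Z0 ∈ P0 R C)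
    (hmax : ∀ X ∈ P0 R C, entH X ≤ entH Z0)
    (hintr : ∀ i j, 0 < Z0 i j ∧ Z0 i j < 1) (i i0 : Fin m) (j j0 : Fin n) :
    (Real.log (1 - Z0 i j) - Real.log (Z0 i j)) + (Real.log (1 - Z0 i0 j0) - Real.log (Z0 i0 j0))
    = (Real.log (1 - Z0 i j0) - Real.log (Z0 i j0))
      + (Real.log (1 - Z0 i0 j) - Real.log (Z0 i0 j)) := by
  set g : Fin m → Fin n → ℝ := fun p q => Real.log (1 - Z0 p q) - Real.log (Z0 p q) with hg
  set D : Matrix (Fin m) (Fin n) ℝ := fun p q =>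
    ((if p = i then (1:ℝ) else 0) - (if p = i0 then 1 else 0)) *
    ((if q = j then (1:ℝ) else 0) - (if q = j0 then 1 else 0)) with hD
  have hDbound : ∀ p q, |D p q| ≤ 1 := by
    intro p q
    rw [hD]
    rw [abs_mul]
    have h1 : ∀ a b : Prop, ∀ _ : Decidable a, ∀ _ : Decidable b,
        |((if a then (1:ℝ) else 0) - (if b then 1 else 0))| ≤ 1 := by
      intro a b _ _
      split_ifs <;> simp
    calc |(if p = i then (1:ℝ) else 0) - (if p = i0 then 1 else 0)| *
          |(if q = j then (1:ℝ) else 0) - (if q = j0 then 1 else 0)| ≤ 1 * 1 := by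
          apply mul_le_mul (h1 _ _ _ _) (h1 _ _ _ _) (abs_nonneg _) zero_le_one
      _ = 1 := by norm_num
  have hDrow : ∀ p, ∑ q, D p q = 0 := by
    intro p
    rw [hD]
    simp [← Finset.mul_sum, Finset.sum_sub_distrib]
  have hDcol : ∀ q, ∑ p, D p q = 0 := by
    intro q
    rw [hD]
    simp [← Finset.sum_mul, Finset.sum_sub_distrib]
  haveI : Nonempty (Fin m × Fin n) := ⟨(i0, j0)⟩
  set ε0 : ℝ := Finset.inf' Finset.univ Finset.univ_nonempty
    (fun p : Fin m × Fin n => min (Z0 p.1 p.2) (1 - Z0 p.1 p.2)) with hε0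
  have hε0pos : 0 < ε0 := by
    rw [hε0, Finset.lt_inf'_iff]
    intro p _
    exact lt_min (hintr p.1 p.2).1 (by linarith [(hintr p.1 p.2).2])
  have hε0le : ∀ p q, ε0 ≤ min (Z0 p q) (1 - Z0 p q) := fun p q =>
    Finset.inf'_le _ (Finset.mem_univ ((p, q) : Fin m × Fin n))
  have hmem : ∀ ε : ℝ, |ε| < ε0 → Z0 + ε • D ∈ P0 R C := by
    intro ε hε
    have hent : ∀ p q, (Z0 + ε • D) p q = Z0 p q + ε * D p q := by
      intro p q; simp [Matrix.add_apply]
    refine ⟨fun p q => ?_, fun p => ?_, fun q => ?_⟩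
    · rw [hent]
      have h1 : |ε * D p q| ≤ |ε| := by
        rw [abs_mul]
        nlinarith [hDbound p q, abs_nonneg ε]
      have h2 := hε0le p q
      have h3 := abs_le.1 h1
      constructor
      · have := le_min_iff.1 h2
        linarith [this.1]
      · have := le_min_iff.1 h2
        linarith [this.2]
    · have : ∑ q, (Z0 + ε • D) p q = ∑ q, Z0 p q + ε * ∑ q, D p q := by
        simp only [hent, Finset.sum_add_distrib, Finset.mul_sum]
      rw [this, hDrow, hZ0.2.1 p]
      ring
    · have : ∑ p, (Z0 + ε • D) p q = ∑ p, Z0 p q + ε * ∑ p, D p q := by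
        simp only [hent, Finset.sum_add_distrib, Finset.mul_sum]
      rw [this, hDcol, hZ0.2.2 q]
      ring
  set φ : ℝ → ℝ := fun ε => ∑ p : Fin m, ∑ q : Fin n, Real.binEntropy (Z0 p q + ε * D p q)
    with hφ
  have hφval : ∀ ε : ℝ, |ε| < ε0 → φ ε = entH (Z0 + ε • D) := by
    intro ε _
    rw [hφ, entH_eq]
    congr 1
  have hφ0 : φ 0 = entH Z0 := by
    rw [hφ, entH_eq]
    simp
  have hlocmax : IsLocalMax φ 0 := by
    filter_upwards [Metric.ball_mem_nhds (0:ℝ) hε0pos] with ε hε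
    rw [Metric.mem_ball, Real.dist_eq, sub_zero] at hε
    rw [hφval ε hε, hφ0]
    exact hmax _ (hmem ε hε)
  have hderiv : HasDerivAt φ (∑ p : Fin m, ∑ q : Fin n, (Real.log (1 - Z0 p q)
      - Real.log (Z0 p q)) * D p q) 0 := by
    apply HasDerivAt.fun_sum
    intro p _
    apply HasDerivAt.fun_sum
    intro q _
    have hinner : HasDerivAt (fun ε : ℝ => Z0 p q + ε * D p q) (D p q) 0 := by
      simpa using ((hasDerivAt_id (0:ℝ)).mul_const (D p q)).const_add (Z0 p q)
    have houter : HasDerivAt Real.binEntropy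
        (Real.log (1 - (Z0 p q + 0 * D p q)) - Real.log (Z0 p q + 0 * D p q))
        ((fun ε : ℝ => Z0 p q + ε * D p q) 0) := by
      simp only [zero_mul, add_zero]
      exact Real.hasDerivAt_binEntropy (ne_of_gt (hintr p q).1)
        (by linarith [(hintr p q).2])
    have := houter.comp 0 hinner
    simp only [zero_mul, add_zero] at this ⊢
    exact this
  have hzero := hlocmax.hasDerivAt_eq_zero hderiv
  have heval : ∑ p : Fin m, ∑ q : Fin n, (Real.log (1 - Z0 p q) - Real.log (Z0 p q)) * D p q
      = g i j - g i j0 - g i0 j + g i0 j0 := by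
    simp only [hD, hg, mul_sub, sub_mul, mul_ite, mul_one, mul_zero, ite_mul, one_mul, zero_mul,
      Finset.sum_sub_distrib, Finset.sum_ite_eq', Finset.mem_univ, if_true]
    ring
  rw [heval] at hzero
  simp only [hg] at hzero ⊢
  linarith

/-! ### The function `F0` -/

lemma F0_pos {m n : ℕ} (R : Fin m → ℕ) (C : Fin n → ℕ) {x : Fin m → ℝ} {y : Fin n → ℝ}
    (hx : ∀ i, 0 < x i) (hy : ∀ j, 0 < y j) : 0 < F0 R C x y := by
  unfold F0
  have h1 : 0 < ∏ i, x i ^ (-(R i : ℤ)) := Finset.prod_pos fun i _ => zpow_pos (hx i) _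
  have h2 : 0 < ∏ j, y j ^ (-(C j : ℤ)) := Finset.prod_pos fun j _ => zpow_pos (hy j) _
  have h3 : 0 < ∏ i, ∏ j, (1 + x i * y j) :=
    Finset.prod_pos fun i _ => Finset.prod_pos fun j _ => by linarith [mul_pos (hx i) (hy j)]
  exact mul_pos (mul_pos h1 h2) h3

lemma logF0 {m n : ℕ} (R : Fin m → ℕ) (C : Fin n → ℕ) {x : Fin m → ℝ} {y : Fin n → ℝ}
    (hx : ∀ i, 0 < x i) (hy : ∀ j, 0 < y j) {X : Matrix (Fin m) (Fin n) ℝ} (hX : X ∈ P0 R C) :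
    Real.log (F0 R C x y)
      = ∑ i, ∑ j, (Real.log (1 + x i * y j) - X i j * Real.log (x i * y j)) := by
  have hxyj : ∀ i j, 0 < x i * y j := fun i j => mul_pos (hx i) (hy j)
  have h1 : Real.log (∏ i, x i ^ (-(R i : ℤ))) = -∑ i, (R i : ℝ) * Real.log (x i) := by
    rw [Real.log_prod (fun i _ => ne_of_gt (zpow_pos (hx i) _))]
    rw [← Finset.sum_neg_distrib]
    congr 1; funext i
    rw [Real.log_zpow]
    push_cast
    ring
  have h2 : Real.log (∏ j, y j ^ (-(C j : ℤ))) = -∑ j, (C j : ℝ) * Real.log (y j) := by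
    rw [Real.log_prod (fun j _ => ne_of_gt (zpow_pos (hy j) _))]
    rw [← Finset.sum_neg_distrib]
    congr 1; funext j
    rw [Real.log_zpow]
    push_cast
    ring
  have h3 : Real.log (∏ i, ∏ j, (1 + x i * y j)) = ∑ i, ∑ j, Real.log (1 + x i * y j) := by
    rw [Real.log_prod (fun i _ => ne_of_gt (Finset.prod_pos fun j _ => by
      linarith [hxyj i j]))]
    congr 1; funext i
    rw [Real.log_prod (fun j _ => ne_of_gt (by linarith [hxyj i j]))]
  have hF : Real.log (F0 R C x y) = Real.log (∏ i, x i ^ (-(R i : ℤ)))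
      + Real.log (∏ j, y j ^ (-(C j : ℤ))) + Real.log (∏ i, ∏ j, (1 + x i * y j)) := by
    unfold F0
    have hA : (0:ℝ) < ∏ i, x i ^ (-(R i : ℤ)) := Finset.prod_pos fun i _ => zpow_pos (hx i) _
    have hB : (0:ℝ) < ∏ j, y j ^ (-(C j : ℤ)) := Finset.prod_pos fun j _ => zpow_pos (hy j) _
    rw [Real.log_mul (ne_of_gt (mul_pos hA hB)) (ne_of_gt (Finset.prod_pos fun i _ =>
        Finset.prod_pos fun j _ => by linarith [hxyj i j])),
      Real.log_mul (ne_of_gt hA) (ne_of_gt hB)]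
  rw [hF, h1, h2, h3]
  have hr : ∑ i, (R i : ℝ) * Real.log (x i) = ∑ i, ∑ j, X i j * Real.log (x i) := by
    congr 1; funext i
    rw [← hX.2.1 i, Finset.sum_mul]
  have hcsum : ∑ j, (C j : ℝ) * Real.log (y j) = ∑ i, ∑ j, X i j * Real.log (y j) := by
    rw [Finset.sum_comm]
    congr 1; funext j
    rw [← hX.2.2 j, Finset.sum_mul]
  rw [hr, hcsum]
  have hlogxy : ∀ i j, Real.log (x i * y j) = Real.log (x i) + Real.log (y j) :=
    fun i j => Real.log_mul (ne_of_gt (hx i)) (ne_of_gt (hy j))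
  simp only [hlogxy, mul_add, sub_add_eq_sub_sub, Finset.sum_sub_distrib]
  ring

lemma entH_le_logF0 {m n : ℕ} (R : Fin m → ℕ) (C : Fin n → ℕ) {x : Fin m → ℝ} {y : Fin n → ℝ}
    (hx : ∀ i, 0 < x i) (hy : ∀ j, 0 < y j) {X : Matrix (Fin m) (Fin n) ℝ} (hX : X ∈ P0 R C) :
    entH X ≤ Real.log (F0 R C x y) := by
  rw [logF0 R C hx hy hX, entH_eq]
  refine Finset.sum_le_sum fun i _ => Finset.sum_le_sum fun j _ => ?_
  exact key_ineq (mul_pos (hx i) (hy j)) (hX.1 i j).1 (hX.1 i j).2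

/-! ### The main theorem -/

theorem stmt8 {m n : ℕ} (R : Fin m → ℕ) (C : Fin n → ℕ)
    (hR : ∀ i, 0 < R i) (hC : ∀ j, 0 < C j) (hbal : ∑ i, R i = ∑ j, C j)
    (hint : ∃ Y ∈ P0 R C, ∀ i j, 0 < Y i j ∧ Y i j < 1) :
    StrictConcaveOn ℝ (P0 R C) entH ∧
    ∃ Z0 ∈ P0 R C,
      (∀ X ∈ P0 R C, X ≠ Z0 → entH X < entH Z0) ∧
      (∀ i j, 0 < Z0 i j ∧ Z0 i j < 1) ∧
      (∃ x y, (∀ i, 0 < x i) ∧ (∀ j, 0 < y j) ∧ F0 R C x y = alpha0 R C) ∧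
      alpha0 R C = Real.exp (entH Z0) := by
  obtain ⟨Y, hY, hYint⟩ := hint
  refine ⟨strictConcave_entH R C, ?_⟩
  obtain ⟨Z0, hZ0, hmax⟩ := exists_max R C ⟨Y, hY⟩
  have hintr : ∀ i j, 0 < Z0 i j ∧ Z0 i j < 1 := interior_max R C hY hYint hZ0 hmax
  refine ⟨Z0, hZ0, strict_max R C hZ0 hmax, hintr, ?_⟩
  -- case split on degeneracy
  rcases Nat.eq_zero_or_pos m with hm | hm
  · -- m = 0; then n = 0 as well
    have hn : n = 0 := by
      by_contra hn
      obtain ⟨j⟩ := Fin.pos_iff_nonempty.1 (Nat.pos_of_ne_zero hn)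
      have := hY.2.2 j
      subst hm
      have hCj : (0:ℝ) < (C j : ℝ) := by exact_mod_cast hC j
      simp at this
      linarith
    subst hm; subst hn
    have hF0 : ∀ x : Fin 0 → ℝ, ∀ y : Fin 0 → ℝ, F0 R C x y = 1 := by
      intro x y; simp [F0]
    have hent0 : entH Z0 = 0 := by simp [entH]
    have hset : {z | ∃ x y, (∀ i, 0 < x i) ∧ (∀ j, 0 < y j) ∧ z = F0 R C x y} = {1} := by
      ext z
      constructor
      · rintro ⟨x, y, _, _, rfl⟩; simp [hF0]
      · rintro rfl
        exact ⟨Fin.elim0, Fin.elim0, fun i => i.elim0, fun j => j.elim0, (hF0 _ _).symm⟩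
    have halpha : alpha0 R C = 1 := by
      rw [alpha0, hset, csInf_singleton]
    refine ⟨⟨Fin.elim0, Fin.elim0, fun i => i.elim0, fun j => j.elim0, by
      rw [hF0, halpha]⟩, ?_⟩
    rw [halpha, hent0, Real.exp_zero]
  rcases Nat.eq_zero_or_pos n with hn | hn
  · -- n = 0 but m > 0 : contradiction
    obtain ⟨i⟩ := Fin.pos_iff_nonempty.1 hm
    have := hY.2.1 i
    subst hn
    have hRi : (0:ℝ) < (R i : ℝ) := by exact_mod_cast hR i
    simp at this
    linarith
  -- main case
  obtain ⟨i0⟩ := Fin.pos_iff_nonempty.1 hm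
  obtain ⟨j0⟩ := Fin.pos_iff_nonempty.1 hn
  set g : Fin m → Fin n → ℝ := fun p q => Real.log (1 - Z0 p q) - Real.log (Z0 p q) with hg
  set x : Fin m → ℝ := fun i => Real.exp (g i0 j0 - g i j0) with hxdef
  set y : Fin n → ℝ := fun j => Real.exp (-(g i0 j)) with hydef
  have hx : ∀ i, 0 < x i := fun i => Real.exp_pos _
  have hy : ∀ j, 0 < y j := fun j => Real.exp_pos _
  have hxy : ∀ i j, x i * y j = Z0 i j / (1 - Z0 i j) := by
    intro i j
    have hfo := firstorder R C hZ0 hmax hintr i i0 j j0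
    rw [hxdef, hydef, ← Real.exp_add]
    have e1 : g i0 j0 - g i j0 + -(g i0 j) = Real.log (Z0 i j) - Real.log (1 - Z0 i j) := by
      simp only [hg]
      linarith
    rw [e1, Real.exp_sub, Real.exp_log (hintr i j).1,
      Real.exp_log (by linarith [(hintr i j).2] : (0:ℝ) < 1 - Z0 i j)]
  have hlogeq : Real.log (F0 R C x y) = entH Z0 := by
    rw [logF0 R C hx hy hZ0, entH_eq]
    refine Finset.sum_congr rfl fun i _ => Finset.sum_congr rfl fun j _ => ?_
    rw [hxy i j]
    exact key_eq (hintr i j).1 (hintr i j).2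
  have hF0eq : F0 R C x y = Real.exp (entH Z0) := by
    rw [← hlogeq, Real.exp_log (F0_pos R C hx hy)]
  have halpha : alpha0 R C = Real.exp (entH Z0) := by
    apply IsLeast.csInf_eq
    constructor
    · exact ⟨x, y, hx, hy, hF0eq.symm⟩
    · rintro z ⟨x', y', hx', hy', rfl⟩
      have h := entH_le_logF0 R C hx' hy' hZ0
      calc Real.exp (entH Z0) ≤ Real.exp (Real.log (F0 R C x' y')) := Real.exp_le_exp.2 h
        _ = F0 R C x' y' := Real.exp_log (F0_pos R C hx' hy')
  exact ⟨⟨x, y, hx, hy, by rw [hF0eq, halpha]⟩, halpha⟩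
end

section
/- Let R=(r_1,…,r_m) and C=(c_1,…,c_n) be positive integer vectors with r_1+…+r_m = c_1+…+c_n, and let P_+(R,C) be the polytope of all m×n real matrices X=(x_{ij}) with non-negative entries, row sums R and column sums C. Define g: P_+(R,C) → ℝ by g(X) = Σ_{i,j} [ (x_{ij}+1) ln(1+x_{ij}) − x_{ij} ln x_{ij} ]. Then g is strictly concave on P_+(R,C), hence attains its maximum at a unique matrix Z_+ = (z_{ij}) (the maximum entropy matrix), and moreover: (1) z_{ij} > 0 for all i,j; (2) α_+(R,C) = e^{g(Z_+)}. -/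
open Finset

/-- `F_+(x, y) = (∏ᵢ xᵢ^{-rᵢ}) (∏ⱼ yⱼ^{-cⱼ}) ∏_{i,j} 1/(1 - xᵢ yⱼ)`. -/
noncomputable def Fplus {m n : ℕ} (R : Fin m → ℕ) (C : Fin n → ℕ)
    (x : Fin m → ℝ) (y : Fin n → ℝ) : ℝ :=
  (∏ i, x i ^ (-(R i : ℤ))) * (∏ j, y j ^ (-(C j : ℤ))) * ∏ i, ∏ j, (1 - x i * y j)⁻¹

/-- `α_+(R, C) = min { F_+(x, y) : 0 < xᵢ < 1, 0 < yⱼ < 1 }` (the minimum is attained). -/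
noncomputable def alphaplus {m n : ℕ} (R : Fin m → ℕ) (C : Fin n → ℕ) : ℝ :=
  sInf {z | ∃ x y, (∀ i, 0 < x i ∧ x i < 1) ∧ (∀ j, 0 < y j ∧ y j < 1) ∧ z = Fplus R C x y}

/-- The polytope of `m × n` non-negative real matrices with row sums `R` and column sums `C`. -/
def Pplus {m n : ℕ} (R : Fin m → ℕ) (C : Fin n → ℕ) : Set (Matrix (Fin m) (Fin n) ℝ) :=
  {X | (∀ i j, 0 ≤ X i j) ∧ (∀ i, ∑ j, X i j = R i) ∧ (∀ j, ∑ i, X i j = C j)}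

/-- The entropy `g(X) = Σ_{i,j} [(x_{ij} + 1) ln(1 + x_{ij}) − x_{ij} ln x_{ij}]`
(with the convention `0 · ln 0 = 0`, which holds since `Real.log 0 = 0`). -/
noncomputable def entG {m n : ℕ} (X : Matrix (Fin m) (Fin n) ℝ) : ℝ :=
  ∑ i, ∑ j, ((X i j + 1) * Real.log (1 + X i j) - X i j * Real.log (X i j))

noncomputable def entfun (t : ℝ) : ℝ := (t + 1) * Real.log (1 + t) - t * Real.log t

lemma entfun_continuous : Continuous entfun := by
  have h1 : Continuous fun t : ℝ => (1 + t) * Real.log (1 + t) :=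
    Real.continuous_mul_log.comp (continuous_const.add continuous_id)
  have : entfun = fun t => (1 + t) * Real.log (1 + t) - t * Real.log t := by
    funext t; unfold entfun; ring
  rw [this]
  exact h1.sub Real.continuous_mul_log

lemma entfun_hasDerivAt {t : ℝ} (ht : 0 < t) :
    HasDerivAt entfun (Real.log (1 + t) - Real.log t) t := by
  have h1 : HasDerivAt (fun s : ℝ => (s + 1) * Real.log (1 + s)) (Real.log (1 + t) + 1) t := by
    have hinner : HasDerivAt (fun s : ℝ => 1 + s) 1 t := by
      simpa using (hasDerivAt_id t).const_add 1
    have hlog : HasDerivAt (fun s : ℝ => Real.log (1 + s)) (1 / (1 + t)) t :=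
      hinner.log (by linarith)
    have := ((hasDerivAt_id t).add_const 1).mul hlog
    refine this.congr_deriv ?_
    simp only [id_eq]
    field_simp
    ring
  have h2 : HasDerivAt (fun s : ℝ => s * Real.log s) (Real.log t + 1) t :=
    Real.hasDerivAt_mul_log (ne_of_gt ht)
  have := h1.sub h2
  refine this.congr_deriv ?_
  ring

lemma entfun_strictConcave : StrictConcaveOn ℝ (Set.Ici (0:ℝ)) entfun := by
  apply StrictAntiOn.strictConcaveOn_of_deriv (convex_Ici 0) entfun_continuous.continuousOn
  rw [interior_Ici]
  intro a ha b hb hab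
  rw [Set.mem_Ioi] at ha hb
  rw [(entfun_hasDerivAt ha).deriv, (entfun_hasDerivAt hb).deriv]
  rw [← Real.log_div (by linarith) (ne_of_gt ha), ← Real.log_div (by linarith) (ne_of_gt hb)]
  apply Real.log_lt_log (by positivity)
  rw [div_lt_div_iff₀ hb ha]
  nlinarith

lemma entfun_le (z s : ℝ) (hz : 0 ≤ z) (hs0 : 0 < s) (hs1 : s < 1) :
    entfun z ≤ -z * Real.log s - Real.log (1 - s) := by
  rcases eq_or_lt_of_le hz with h | hz
  · subst h
    simp [entfun]
    have : Real.log (1 - s) ≤ 0 := Real.log_nonpos (by linarith) (by linarith)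
    linarith
  · have h1 : Real.log s + Real.log (1 + z) - Real.log z ≤ s * (1 + z) / z - 1 := by
      have hpos : (0:ℝ) < s * (1 + z) / z := by positivity
      have := Real.log_le_sub_one_of_pos hpos
      rw [Real.log_div (by positivity) (ne_of_gt hz), Real.log_mul (ne_of_gt hs0) (by positivity)] at this
      linarith
    have h2 : Real.log (1 - s) + Real.log (1 + z) ≤ (1 - s) * (1 + z) - 1 := by
      have hpos : (0:ℝ) < (1 - s) * (1 + z) := by nlinarith
      have := Real.log_le_sub_one_of_pos hpos
      rw [Real.log_mul (by linarith) (by positivity)] at this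
      linarith
    have h1' : z * (Real.log s + Real.log (1 + z) - Real.log z) ≤ s * (1 + z) - z := by
      have := mul_le_mul_of_nonneg_left h1 (le_of_lt hz)
      calc z * (Real.log s + Real.log (1+z) - Real.log z) ≤ z * (s * (1+z)/z - 1) := this
        _ = s * (1 + z) - z := by field_simp
    simp only [entfun]
    nlinarith



lemma entfun_eq (s : ℝ) (hs0 : 0 < s) (hs1 : s < 1) :
    entfun (s / (1 - s)) = -(s / (1 - s)) * Real.log s - Real.log (1 - s) := by
  have hu : (0:ℝ) < 1 - s := by linarith
  have h1 : 1 + s / (1 - s) = (1 - s)⁻¹ := by field_simp; ring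
  have h2 : Real.log (s / (1 - s)) = Real.log s - Real.log (1 - s) :=
    Real.log_div (ne_of_gt hs0) (ne_of_gt hu)
  unfold entfun
  rw [h1, h2, Real.log_inv]
  have h3 : (s / (1 - s) + 1) = (1 - s)⁻¹ := by field_simp; ring
  rw [h3]
  have h4 : (1 - s)⁻¹ = 1 + s / (1 - s) := h1.symm
  field_simp
  ring





lemma entG_eq {m n : ℕ} (X : Matrix (Fin m) (Fin n) ℝ) :
    entG X = ∑ p ∈ (univ ×ˢ univ : Finset (Fin m × Fin n)), entfun (X p.1 p.2) := by
  rw [Finset.sum_product]; rfl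

lemma Pplus_convex {m n : ℕ} (R : Fin m → ℕ) (C : Fin n → ℕ) : Convex ℝ (Pplus R C) := by
  intro X hX Y hY a b ha hb hab
  obtain ⟨hX0, hXr, hXc⟩ := hX
  obtain ⟨hY0, hYr, hYc⟩ := hY
  refine ⟨fun i j => ?_, fun i => ?_, fun j => ?_⟩
  · have h : (a • X + b • Y) i j = a * X i j + b * Y i j := by
      simp [Matrix.add_apply, Matrix.smul_apply, smul_eq_mul]
    rw [h]
    have := mul_nonneg ha (hX0 i j)
    have := mul_nonneg hb (hY0 i j)
    linarith
  · simp only [Matrix.add_apply, Matrix.smul_apply, smul_eq_mul]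
    rw [Finset.sum_add_distrib, ← Finset.mul_sum, ← Finset.mul_sum, hXr i, hYr i]
    nlinarith [hab]
  · simp only [Matrix.add_apply, Matrix.smul_apply, smul_eq_mul]
    rw [Finset.sum_add_distrib, ← Finset.mul_sum, ← Finset.mul_sum, hXc j, hYc j]
    nlinarith [hab]

lemma entG_strictConcave {m n : ℕ} (R : Fin m → ℕ) (C : Fin n → ℕ) :
    StrictConcaveOn ℝ (Pplus R C) entG := by
  refine ⟨Pplus_convex R C, ?_⟩
  intro X hX Y hY hne a b ha hb hab
  have hme : ∃ i j, X i j ≠ Y i j := by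
    by_contra h
    push_neg at h
    exact hne (by ext i j; exact h i j)
  obtain ⟨i0, j0, hij⟩ := hme
  simp only [smul_eq_mul]
  rw [entG_eq, entG_eq, entG_eq, Finset.mul_sum, Finset.mul_sum, ← Finset.sum_add_distrib]
  apply Finset.sum_lt_sum
  · rintro ⟨i, j⟩ _
    have h := entfun_strictConcave.concaveOn.2 (Set.mem_Ici.2 (hX.1 i j))
      (Set.mem_Ici.2 (hY.1 i j)) ha.le hb.le hab
    simpa [Matrix.add_apply, Matrix.smul_apply, smul_eq_mul] using h
  · refine ⟨(i0, j0), Finset.mem_univ _, ?_⟩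
    have h := entfun_strictConcave.2 (Set.mem_Ici.2 (hX.1 i0 j0))
      (Set.mem_Ici.2 (hY.1 i0 j0)) hij ha hb hab
    simpa [Matrix.add_apply, Matrix.smul_apply, smul_eq_mul] using h



noncomputable def ellF {m n : ℕ} (R : Fin m → ℕ) (C : Fin n → ℕ)
    (x : Fin m → ℝ) (y : Fin n → ℝ) : ℝ :=
  (∑ i, -((R i : ℝ) * Real.log (x i))) + (∑ j, -((C j : ℝ) * Real.log (y j)))
    + ∑ i, ∑ j, -Real.log (1 - x i * y j)

lemma sum_manip {m n : ℕ} (R : Fin m → ℕ) (C : Fin n → ℕ)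
    (x : Fin m → ℝ) (y : Fin n → ℝ)
    (X : Matrix (Fin m) (Fin n) ℝ)
    (hrow : ∀ i, ∑ j, X i j = (R i : ℝ)) (hcol : ∀ j, ∑ i, X i j = (C j : ℝ))
    (hx : ∀ i, x i ≠ 0) (hy : ∀ j, y j ≠ 0) :
    ∑ i, ∑ j, (-(X i j) * Real.log (x i * y j) - Real.log (1 - x i * y j))
      = ellF R C x y := by
  have key : ∀ i j, -(X i j) * Real.log (x i * y j) - Real.log (1 - x i * y j)
      = -(X i j) * Real.log (x i) + (-(X i j) * Real.log (y j)) + -Real.log (1 - x i * y j) := by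
    intro i j
    rw [Real.log_mul (hx i) (hy j)]
    ring
  simp_rw [key, Finset.sum_add_distrib]
  unfold ellF
  congr 1
  congr 1
  · apply Finset.sum_congr rfl
    intro i _
    rw [show ∑ j, -(X i j) * Real.log (x i) = -(∑ j, X i j) * Real.log (x i) by
      rw [← Finset.sum_mul, ← Finset.sum_neg_distrib]]
    rw [hrow i]; ring
  · rw [Finset.sum_comm]
    apply Finset.sum_congr rfl
    intro j _
    rw [show ∑ i, -(X i j) * Real.log (y j) = -(∑ i, X i j) * Real.log (y j) by
      rw [← Finset.sum_mul, ← Finset.sum_neg_distrib]]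
    rw [hcol j]; ring

lemma Fplus_eq_exp {m n : ℕ} (R : Fin m → ℕ) (C : Fin n → ℕ)
    (x : Fin m → ℝ) (y : Fin n → ℝ)
    (hx : ∀ i, 0 < x i) (hy : ∀ j, 0 < y j) (hxy : ∀ i j, x i * y j < 1) :
    Fplus R C x y = Real.exp (ellF R C x y) := by
  unfold Fplus ellF
  rw [Real.exp_add, Real.exp_add, Real.exp_sum, Real.exp_sum]
  congr 1
  · congr 1
    · apply Finset.prod_congr rfl
      intro i _
      rw [Real.exp_neg, ← Real.log_pow, Real.exp_log (pow_pos (hx _) _)]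
      rw [zpow_neg, zpow_natCast]
    · apply Finset.prod_congr rfl
      intro j _
      rw [Real.exp_neg, ← Real.log_pow, Real.exp_log (pow_pos (hy _) _)]
      rw [zpow_neg, zpow_natCast]
  · rw [Real.exp_sum]
    apply Finset.prod_congr rfl
    intro i _
    rw [Real.exp_sum]
    apply Finset.prod_congr rfl
    intro j _
    have h : (0:ℝ) < 1 - x i * y j := by linarith [hxy i j]
    rw [Real.exp_neg, Real.exp_log h]



lemma ellF_bounds {m n : ℕ} (R : Fin m → ℕ) (C : Fin n → ℕ)
    (hR : ∀ i, 0 < R i) (hC : ∀ j, 0 < C j)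
    (x : Fin m → ℝ) (y : Fin n → ℝ)
    (hx : ∀ i, 0 < x i ∧ x i < 1) (hy : ∀ j, 0 < y j ∧ y j < 1) :
    (∀ i, -Real.log (x i) ≤ ellF R C x y) ∧ (∀ j, -Real.log (y j) ≤ ellF R C x y) ∧
      (∀ i j, -Real.log (1 - x i * y j) ≤ ellF R C x y) ∧ 0 ≤ ellF R C x y := by
  have hxy : ∀ i j, 0 < x i * y j ∧ x i * y j < 1 := by
    intro i j
    constructor
    · exact mul_pos (hx i).1 (hy j).1
    · nlinarith [(hx i).1, (hx i).2, (hy j).1, (hy j).2]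
  have hterm1 : ∀ i, 0 ≤ -((R i : ℝ) * Real.log (x i)) := by
    intro i
    have := Real.log_nonpos (hx i).1.le (hx i).2.le
    have : (R i : ℝ) * Real.log (x i) ≤ 0 :=
      mul_nonpos_of_nonneg_of_nonpos (Nat.cast_nonneg _) this
    linarith
  have hterm2 : ∀ j, 0 ≤ -((C j : ℝ) * Real.log (y j)) := by
    intro j
    have := Real.log_nonpos (hy j).1.le (hy j).2.le
    have : (C j : ℝ) * Real.log (y j) ≤ 0 :=
      mul_nonpos_of_nonneg_of_nonpos (Nat.cast_nonneg _) this
    linarith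
  have hterm3 : ∀ i j, 0 ≤ -Real.log (1 - x i * y j) := by
    intro i j
    have h1 := (hxy i j).1
    have h2 := (hxy i j).2
    have := Real.log_nonpos (x := 1 - x i * y j) (by linarith) (by linarith)
    linarith
  have hA : 0 ≤ ∑ i, -((R i : ℝ) * Real.log (x i)) :=
    Finset.sum_nonneg fun i _ => hterm1 i
  have hB : 0 ≤ ∑ j, -((C j : ℝ) * Real.log (y j)) :=
    Finset.sum_nonneg fun j _ => hterm2 j
  have hDin : ∀ i, 0 ≤ ∑ j, -Real.log (1 - x i * y j) :=
    fun i => Finset.sum_nonneg fun j _ => hterm3 i j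
  have hD : 0 ≤ ∑ i, ∑ j, -Real.log (1 - x i * y j) :=
    Finset.sum_nonneg fun i _ => hDin i
  refine ⟨?_, ?_, ?_, by unfold ellF; linarith⟩
  · intro i
    have h1 : -Real.log (x i) ≤ -((R i : ℝ) * Real.log (x i)) := by
      have hlog : Real.log (x i) ≤ 0 := Real.log_nonpos (hx i).1.le (hx i).2.le
      have hr : (1 : ℝ) ≤ (R i : ℝ) := by exact_mod_cast hR i
      nlinarith
    have h2 : -((R i : ℝ) * Real.log (x i)) ≤ ∑ i, -((R i : ℝ) * Real.log (x i)) :=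
      Finset.single_le_sum (fun i _ => hterm1 i) (Finset.mem_univ i)
    unfold ellF; linarith
  · intro j
    have h1 : -Real.log (y j) ≤ -((C j : ℝ) * Real.log (y j)) := by
      have hlog : Real.log (y j) ≤ 0 := Real.log_nonpos (hy j).1.le (hy j).2.le
      have hr : (1 : ℝ) ≤ (C j : ℝ) := by exact_mod_cast hC j
      nlinarith
    have h2 : -((C j : ℝ) * Real.log (y j)) ≤ ∑ j, -((C j : ℝ) * Real.log (y j)) :=
      Finset.single_le_sum (fun j _ => hterm2 j) (Finset.mem_univ j)
    unfold ellF; linarith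
  · intro i j
    have h1 : -Real.log (1 - x i * y j) ≤ ∑ j, -Real.log (1 - x i * y j) :=
      Finset.single_le_sum (fun j _ => hterm3 i j) (Finset.mem_univ j)
    have h2 : ∑ j, -Real.log (1 - x i * y j) ≤ ∑ i, ∑ j, -Real.log (1 - x i * y j) :=
      Finset.single_le_sum (fun i _ => hDin i) (Finset.mem_univ i)
    unfold ellF; linarith

lemma ellF_scale {m n : ℕ} (R : Fin m → ℕ) (C : Fin n → ℕ)
    (hbal : ∑ i, R i = ∑ j, C j)
    (x : Fin m → ℝ) (y : Fin n → ℝ)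
    (hx : ∀ i, 0 < x i) (hy : ∀ j, 0 < y j) {t : ℝ} (ht : 0 < t) :
    ellF R C (fun i => t * x i) (fun j => t⁻¹ * y j) = ellF R C x y := by
  have e1 : ∀ i, -((R i : ℝ) * Real.log (t * x i))
      = -((R i : ℝ) * Real.log (x i)) - (R i : ℝ) * Real.log t := by
    intro i; rw [Real.log_mul (ne_of_gt ht) (ne_of_gt (hx i))]; ring
  have e2 : ∀ j, -((C j : ℝ) * Real.log (t⁻¹ * y j))
      = -((C j : ℝ) * Real.log (y j)) + (C j : ℝ) * Real.log t := by
    intro j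
    rw [Real.log_mul (inv_ne_zero (ne_of_gt ht)) (ne_of_gt (hy j)), Real.log_inv]
    ring
  have e3 : ∀ i j, (t * x i) * (t⁻¹ * y j) = x i * y j := by
    intro i j
    field_simp
  unfold ellF
  simp_rw [e1, e2, e3]
  rw [Finset.sum_sub_distrib, Finset.sum_add_distrib, ← Finset.sum_mul, ← Finset.sum_mul]
  have hc : (∑ i, ((R i : ℕ) : ℝ)) = ∑ j, ((C j : ℕ) : ℝ) := by
    exact_mod_cast congrArg (Nat.cast : ℕ → ℝ) hbal
  push_cast at hc ⊢
  rw [hc]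
  ring





lemma ellF_exists_min {m n : ℕ} (R : Fin m → ℕ) (C : Fin n → ℕ)
    (hR : ∀ i, 0 < R i) (hC : ∀ j, 0 < C j) (hbal : ∑ i, R i = ∑ j, C j) :
    ∃ x y, (∀ i, 0 < x i ∧ x i < 1) ∧ (∀ j, 0 < y j ∧ y j < 1) ∧
      ∀ x' y', (∀ i, 0 < x' i ∧ x' i < 1) → (∀ j, 0 < y' j ∧ y' j < 1) →
        ellF R C x y ≤ ellF R C x' y' := by
  classical
  set p0 : (Fin m → ℝ) × (Fin n → ℝ) := ⟨fun _ => 1/2, fun _ => 1/2⟩ with hp0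
  set M : ℝ := max (ellF R C p0.1 p0.2) (Real.log 2) with hM
  have hM2 : Real.log 2 ≤ M := le_max_right _ _
  have hMp0 : ellF R C p0.1 p0.2 ≤ M := le_max_left _ _
  set ε : ℝ := Real.exp (-M) with hε
  have hε0 : 0 < ε := Real.exp_pos _
  have hεhalf : ε ≤ 1/2 := by
    rw [hε]
    calc Real.exp (-M) ≤ Real.exp (-Real.log 2) := Real.exp_le_exp.2 (by linarith)
      _ = 1/2 := by rw [Real.exp_neg, Real.exp_log (by norm_num)]; norm_num
  set K : Set ((Fin m → ℝ) × (Fin n → ℝ)) :=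
    (Set.Icc ⟨fun _ => ε, fun _ => ε⟩ ⟨fun _ => 1, fun _ => 1⟩) ∩
      {p | ∀ i j, p.1 i * p.2 j ≤ 1 - ε} with hK
  have hKmem : ∀ p : (Fin m → ℝ) × (Fin n → ℝ), p ∈ K ↔
      (∀ i, ε ≤ p.1 i ∧ p.1 i ≤ 1) ∧ (∀ j, ε ≤ p.2 j ∧ p.2 j ≤ 1) ∧
        ∀ i j, p.1 i * p.2 j ≤ 1 - ε := by
    intro p
    simp only [hK, Set.mem_inter_iff, Set.mem_Icc, Prod.le_def, Pi.le_def, Set.mem_setOf_eq]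
    constructor
    · rintro ⟨⟨⟨h1, h2⟩, ⟨h3, h4⟩⟩, h5⟩
      exact ⟨fun i => ⟨h1 i, h3 i⟩, fun j => ⟨h2 j, h4 j⟩, h5⟩
    · rintro ⟨h1, h2, h3⟩
      exact ⟨⟨⟨fun i => (h1 i).1, fun j => (h2 j).1⟩, ⟨fun i => (h1 i).2, fun j => (h2 j).2⟩⟩, h3⟩
  have hclosed : IsClosed {p : (Fin m → ℝ) × (Fin n → ℝ) | ∀ i j, p.1 i * p.2 j ≤ 1 - ε} := by
    have heq : {p : (Fin m → ℝ) × (Fin n → ℝ) | ∀ i j, p.1 i * p.2 j ≤ 1 - ε}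
        = ⋂ i, ⋂ j, {p | p.1 i * p.2 j ≤ 1 - ε} := by
      ext p; simp
    rw [heq]
    exact isClosed_iInter fun i => isClosed_iInter fun j =>
      isClosed_le (((continuous_apply i).comp continuous_fst).mul
        ((continuous_apply j).comp continuous_snd)) continuous_const
  have hKcompact : IsCompact K := isCompact_Icc.inter_right hclosed
  have hp0K : p0 ∈ K := by
    rw [hKmem]
    refine ⟨fun i => ⟨by simpa [hp0] using hεhalf, by norm_num [hp0]⟩,
      fun j => ⟨by simpa [hp0] using hεhalf, by norm_num [hp0]⟩, fun i j => ?_⟩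
    show (1:ℝ)/2 * (1/2) ≤ 1 - ε
    linarith
  have hKne : K.Nonempty := ⟨p0, hp0K⟩
  have hx0K : ∀ p ∈ K, ∀ i, (0:ℝ) < p.1 i := fun p hp i =>
    lt_of_lt_of_le hε0 (((hKmem p).1 hp).1 i).1
  have hy0K : ∀ p ∈ K, ∀ j, (0:ℝ) < p.2 j := fun p hp j =>
    lt_of_lt_of_le hε0 (((hKmem p).1 hp).2.1 j).1
  have h1xyK : ∀ p ∈ K, ∀ i j, (0:ℝ) < 1 - p.1 i * p.2 j := by
    intro p hp i j
    have := ((hKmem p).1 hp).2.2 i j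
    linarith
  have hcont : ContinuousOn (fun p : (Fin m → ℝ) × (Fin n → ℝ) => ellF R C p.1 p.2) K := by
    unfold ellF
    apply ContinuousOn.add
    apply ContinuousOn.add
    · apply continuousOn_finset_sum
      intro i _
      apply ContinuousOn.neg
      apply ContinuousOn.mul continuousOn_const
      exact ContinuousOn.log ((continuous_apply i).comp continuous_fst).continuousOn
        (fun p hp => ne_of_gt (hx0K p hp i))
    · apply continuousOn_finset_sum
      intro j _
      apply ContinuousOn.neg
      apply ContinuousOn.mul continuousOn_const
      exact ContinuousOn.log ((continuous_apply j).comp continuous_snd).continuousOn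
        (fun p hp => ne_of_gt (hy0K p hp j))
    · apply continuousOn_finset_sum
      intro i _
      apply continuousOn_finset_sum
      intro j _
      apply ContinuousOn.neg
      apply ContinuousOn.log
      · exact (continuousOn_const.sub (((continuous_apply i).comp continuous_fst).mul
          ((continuous_apply j).comp continuous_snd)).continuousOn)
      · intro p hp
        exact ne_of_gt (h1xyK p hp i j)
  obtain ⟨q, hqK, hqmin⟩ := hKcompact.exists_isMinOn hKne hcont
  have hqmin' : ∀ p ∈ K, ellF R C q.1 q.2 ≤ ellF R C p.1 p.2 := fun p hp =>
    isMinOn_iff.1 hqmin p hp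
  have hqM : ellF R C q.1 q.2 ≤ M := le_trans (hqmin' p0 hp0K) hMp0
  -- minimality over the whole open box
  have hminbox : ∀ x' y', (∀ i, 0 < x' i ∧ x' i < 1) → (∀ j, 0 < y' j ∧ y' j < 1) →
      ellF R C q.1 q.2 ≤ ellF R C x' y' := by
    intro x' y' hx' hy'
    by_cases hle : ellF R C x' y' ≤ M
    · obtain ⟨b1, b2, b3, _⟩ := ellF_bounds R C hR hC x' y' hx' hy'
      have hmem : (⟨x', y'⟩ : (Fin m → ℝ) × (Fin n → ℝ)) ∈ K := by
        rw [hKmem]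
        refine ⟨fun i => ⟨?_, (hx' i).2.le⟩, fun j => ⟨?_, (hy' j).2.le⟩, fun i j => ?_⟩
        · have h1 : -M ≤ Real.log (x' i) := by have := b1 i; linarith
          calc ε = Real.exp (-M) := hε
            _ ≤ Real.exp (Real.log (x' i)) := Real.exp_le_exp.2 h1
            _ = x' i := Real.exp_log (hx' i).1
        · have h1 : -M ≤ Real.log (y' j) := by have := b2 j; linarith
          calc ε = Real.exp (-M) := hε
            _ ≤ Real.exp (Real.log (y' j)) := Real.exp_le_exp.2 h1
            _ = y' j := Real.exp_log (hy' j).1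
        · have hpos : (0:ℝ) < 1 - x' i * y' j := by
            nlinarith [(hx' i).1, (hx' i).2, (hy' j).1, (hy' j).2]
          have h1 : -M ≤ Real.log (1 - x' i * y' j) := by have := b3 i j; linarith
          have : ε ≤ 1 - x' i * y' j := by
            calc ε = Real.exp (-M) := hε
              _ ≤ Real.exp (Real.log (1 - x' i * y' j)) := Real.exp_le_exp.2 h1
              _ = 1 - x' i * y' j := Real.exp_log hpos
          linarith
      exact hqmin' ⟨x', y'⟩ hmem
    · linarith
  have hq1 := ((hKmem q).1 hqK).1
  have hq2 := ((hKmem q).1 hqK).2.1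
  have hq3 := ((hKmem q).1 hqK).2.2
  have hqx0 : ∀ i, 0 < q.1 i := fun i => lt_of_lt_of_le hε0 (hq1 i).1
  have hqy0 : ∀ j, 0 < q.2 j := fun j => lt_of_lt_of_le hε0 (hq2 j).1
  set u : ℝ := 1 - ε/2 with hu
  have hu0 : 0 < u := by rw [hu]; linarith
  have hu1 : u < 1 := by rw [hu]; linarith
  by_cases hx1 : ∀ i, q.1 i < 1
  · by_cases hy1 : ∀ j, q.2 j < 1
    · exact ⟨q.1, q.2, fun i => ⟨hqx0 i, hx1 i⟩, fun j => ⟨hqy0 j, hy1 j⟩, hminbox⟩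
    · -- some y-coordinate hits 1; all x ≤ 1 - ε
      push_neg at hy1
      obtain ⟨j0, hj0⟩ := hy1
      have hxsmall : ∀ i, q.1 i ≤ 1 - ε := by
        intro i
        have h3 := hq3 i j0
        nlinarith [hqx0 i, (hq2 j0).2]
      refine ⟨fun i => u⁻¹ * q.1 i, fun j => u * q.2 j, ?_, ?_, ?_⟩
      · intro i
        refine ⟨mul_pos (by positivity) (hqx0 i), ?_⟩
        have hlt : q.1 i < u := lt_of_le_of_lt (hxsmall i) (by rw [hu]; linarith)
        calc u⁻¹ * q.1 i < u⁻¹ * u := by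
              exact mul_lt_mul_of_pos_left hlt (by positivity)
          _ = 1 := inv_mul_cancel₀ (ne_of_gt hu0)
      · intro j
        refine ⟨mul_pos hu0 (hqy0 j), ?_⟩
        show u * q.2 j < 1
        nlinarith [(hq2 j).2, hqy0 j, hu0, hu1]
      · intro x' y' hx' hy'
        have hscale := ellF_scale R C hbal q.1 q.2 hqx0 hqy0 (t := u⁻¹) (by positivity)
        rw [inv_inv] at hscale
        rw [hscale]
        exact hminbox x' y' hx' hy'
  · push_neg at hx1
    obtain ⟨i0, hi0⟩ := hx1
    have hysmall : ∀ j, q.2 j ≤ 1 - ε := by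
      intro j
      have h3 := hq3 i0 j
      nlinarith [hqy0 j, (hq1 i0).2]
    refine ⟨fun i => u * q.1 i, fun j => u⁻¹ * q.2 j, ?_, ?_, ?_⟩
    · intro i
      refine ⟨mul_pos hu0 (hqx0 i), ?_⟩
      show u * q.1 i < 1
      nlinarith [(hq1 i).2, hqx0 i, hu0, hu1]
    · intro j
      refine ⟨mul_pos (by positivity) (hqy0 j), ?_⟩
      have hlt : q.2 j < u := lt_of_le_of_lt (hysmall j) (by rw [hu]; linarith)
      calc u⁻¹ * q.2 j < u⁻¹ * u := by
            exact mul_lt_mul_of_pos_left hlt (by positivity)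
        _ = 1 := inv_mul_cancel₀ (ne_of_gt hu0)
    · intro x' y' hx' hy'
      rw [ellF_scale R C hbal q.1 q.2 hqx0 hqy0 (t := u) hu0]
      exact hminbox x' y' hx' hy'



lemma ellF_symm {m n : ℕ} (R : Fin m → ℕ) (C : Fin n → ℕ)
    (x : Fin m → ℝ) (y : Fin n → ℝ) : ellF C R y x = ellF R C x y := by
  unfold ellF
  rw [Finset.sum_comm]
  simp_rw [mul_comm]
  ring

lemma ellF_row_stationary {m n : ℕ} (R : Fin m → ℕ) (C : Fin n → ℕ)
    (x : Fin m → ℝ) (y : Fin n → ℝ)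
    (hx : ∀ i, 0 < x i ∧ x i < 1) (hy : ∀ j, 0 < y j ∧ y j < 1)
    (hmin : ∀ x' y', (∀ i, 0 < x' i ∧ x' i < 1) → (∀ j, 0 < y' j ∧ y' j < 1) →
      ellF R C x y ≤ ellF R C x' y') :
    ∀ i, ∑ j, x i * y j / (1 - x i * y j) = (R i : ℝ) := by
  classical
  intro i0
  have ht0 : 0 < x i0 := (hx i0).1
  have h1xy : ∀ j, 0 < 1 - x i0 * y j := by
    intro j
    nlinarith [(hx i0).1, (hx i0).2, (hy j).1, (hy j).2]
  set ψ : ℝ → ℝ := fun t => ellF R C (Function.update x i0 t) y with hψ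
  set cst : ℝ := (∑ i ∈ Finset.univ.erase i0, -((R i : ℝ) * Real.log (x i)))
      + (∑ j, -((C j : ℝ) * Real.log (y j)))
      + ∑ i ∈ Finset.univ.erase i0, ∑ j, -Real.log (1 - x i * y j) with hcst
  have hsplit : ψ = fun t => (-((R i0 : ℝ) * Real.log t) + ∑ j, -Real.log (1 - t * y j)) + cst := by
    funext t
    rw [hψ]
    unfold ellF
    beta_reduce
    rw [← Finset.add_sum_erase _ (fun i => -((R i : ℝ) * Real.log (Function.update x i0 t i)))
      (Finset.mem_univ i0)]
    rw [← Finset.add_sum_erase _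
      (fun i => ∑ j, -Real.log (1 - Function.update x i0 t i * y j)) (Finset.mem_univ i0)]
    rw [Function.update_self]
    have hsum1 : (∑ i ∈ Finset.univ.erase i0, -((R i : ℝ) * Real.log (Function.update x i0 t i)))
        = ∑ i ∈ Finset.univ.erase i0, -((R i : ℝ) * Real.log (x i)) :=
      Finset.sum_congr rfl fun i hi => by rw [Function.update_of_ne (Finset.mem_erase.1 hi).1]
    have hsum3 : (∑ i ∈ Finset.univ.erase i0, ∑ j, -Real.log (1 - Function.update x i0 t i * y j))
        = ∑ i ∈ Finset.univ.erase i0, ∑ j, -Real.log (1 - x i * y j) :=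
      Finset.sum_congr rfl fun i hi => by
        exact Finset.sum_congr rfl fun j _ => by
          rw [Function.update_of_ne (Finset.mem_erase.1 hi).1]
    rw [hsum1, hsum3, hcst]
    ring
  have hloc : IsLocalMin ψ (x i0) := by
    have hnhds : Set.Ioo (0:ℝ) 1 ∈ nhds (x i0) := Ioo_mem_nhds (hx i0).1 (hx i0).2
    refine Filter.eventually_of_mem hnhds (fun t ht => ?_)
    have h1 : ψ (x i0) = ellF R C x y := by rw [hψ]; simp [Function.update_eq_self]
    have h2 : ∀ i, 0 < Function.update x i0 t i ∧ Function.update x i0 t i < 1 := by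
      intro i
      by_cases h : i = i0
      · subst h; rw [Function.update_self]; exact ⟨ht.1, ht.2⟩
      · rw [Function.update_of_ne h]; exact hx i
    rw [h1]
    exact hmin _ y h2 hy
  have hderiv : HasDerivAt ψ (-((R i0 : ℝ) * (x i0)⁻¹) + ∑ j, y j / (1 - x i0 * y j)) (x i0) := by
    rw [hsplit]
    apply HasDerivAt.add_const
    apply HasDerivAt.add
    · have := (Real.hasDerivAt_log (ne_of_gt ht0)).const_mul (R i0 : ℝ)
      have h2 := this.neg
      exact h2
    · apply HasDerivAt.fun_sum
      intro j _
      have hin : HasDerivAt (fun t : ℝ => 1 - t * y j) (-(y j)) (x i0) := by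
        simpa using ((hasDerivAt_id (x i0)).mul_const (y j)).const_sub 1
      have hlog := hin.log (ne_of_gt (h1xy j))
      have := hlog.neg
      refine this.congr_deriv ?_
      field_simp
  have hzero := hloc.hasDerivAt_eq_zero hderiv
  have hsum2 : ∑ j, y j / (1 - x i0 * y j) = (R i0 : ℝ) * (x i0)⁻¹ := by linarith
  calc ∑ j, x i0 * y j / (1 - x i0 * y j) = x i0 * ∑ j, y j / (1 - x i0 * y j) := by
        rw [Finset.mul_sum]
        exact Finset.sum_congr rfl fun j _ => by rw [mul_div_assoc]
    _ = (R i0 : ℝ) := by rw [hsum2]; field_simp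

theorem stmt9 {m n : ℕ} (R : Fin m → ℕ) (C : Fin n → ℕ)
    (hR : ∀ i, 0 < R i) (hC : ∀ j, 0 < C j) (hbal : ∑ i, R i = ∑ j, C j) :
    StrictConcaveOn ℝ (Pplus R C) entG ∧
    ∃ Zplus ∈ Pplus R C,
      (∀ X ∈ Pplus R C, X ≠ Zplus → entG X < entG Zplus) ∧
      (∀ i j, 0 < Zplus i j) ∧
      alphaplus R C = Real.exp (entG Zplus) := by
  obtain ⟨x, y, hx, hy, hmin⟩ := ellF_exists_min R C hR hC hbal
  have hxy : ∀ i j, 0 < x i * y j ∧ x i * y j < 1 := by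
    intro i j
    exact ⟨mul_pos (hx i).1 (hy j).1, by nlinarith [(hx i).1, (hx i).2, (hy j).1, (hy j).2]⟩
  have h1xy : ∀ i j, 0 < 1 - x i * y j := fun i j => by linarith [(hxy i j).2]
  -- the candidate matrix
  set Z : Matrix (Fin m) (Fin n) ℝ := Matrix.of (fun i j => x i * y j / (1 - x i * y j)) with hZ
  have hZpos : ∀ i j, 0 < Z i j := fun i j => div_pos (hxy i j).1 (h1xy i j)
  -- row and column sums
  have hrow : ∀ i, ∑ j, Z i j = (R i : ℝ) := by
    intro i
    exact ellF_row_stationary R C x y hx hy hmin i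
  have hmin' : ∀ y' x', (∀ j, 0 < y' j ∧ y' j < 1) → (∀ i, 0 < x' i ∧ x' i < 1) →
      ellF C R y x ≤ ellF C R y' x' := by
    intro y' x' hy' hx'
    rw [ellF_symm R C x y, ellF_symm R C x' y']
    exact hmin x' y' hx' hy'
  have hcol : ∀ j, ∑ i, Z i j = (C j : ℝ) := by
    intro j
    have h := ellF_row_stationary C R y x hy hx hmin' j
    calc ∑ i, Z i j = ∑ i, y j * x i / (1 - y j * x i) := by
          apply Finset.sum_congr rfl
          intro i _
          rw [hZ]
          simp only [Matrix.of_apply]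
          rw [mul_comm]
      _ = (C j : ℝ) := h
  have hZmem : Z ∈ Pplus R C := ⟨fun i j => (hZpos i j).le, hrow, hcol⟩
  -- entG in terms of entfun
  have hentG : ∀ X : Matrix (Fin m) (Fin n) ℝ, entG X = ∑ i, ∑ j, entfun (X i j) := fun X => rfl
  -- value identity : entG Z = ellF R C x y
  have hval : entG Z = ellF R C x y := by
    rw [hentG]
    have hterm : ∀ i j, entfun (Z i j)
        = -(Z i j) * Real.log (x i * y j) - Real.log (1 - x i * y j) := by
      intro i j
      have := entfun_eq (x i * y j) (hxy i j).1 (hxy i j).2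
      rw [hZ]
      simpa using this
    calc ∑ i, ∑ j, entfun (Z i j)
        = ∑ i, ∑ j, (-(Z i j) * Real.log (x i * y j) - Real.log (1 - x i * y j)) := by
          exact Finset.sum_congr rfl fun i _ => Finset.sum_congr rfl fun j _ => hterm i j
      _ = ellF R C x y :=
          sum_manip R C x y Z hrow hcol (fun i => ne_of_gt (hx i).1) (fun j => ne_of_gt (hy j).1)
  -- weak duality : entG X ≤ entG Z for all X in the polytope
  have hdual : ∀ X ∈ Pplus R C, entG X ≤ entG Z := by
    intro X hXmem
    obtain ⟨hX0, hXr, hXc⟩ := hXmem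
    rw [hval, hentG]
    calc ∑ i, ∑ j, entfun (X i j)
        ≤ ∑ i, ∑ j, (-(X i j) * Real.log (x i * y j) - Real.log (1 - x i * y j)) := by
          apply Finset.sum_le_sum
          intro i _
          apply Finset.sum_le_sum
          intro j _
          exact entfun_le (X i j) (x i * y j) (hX0 i j) (hxy i j).1 (hxy i j).2
      _ = ellF R C x y :=
          sum_manip R C x y X hXr hXc (fun i => ne_of_gt (hx i).1) (fun j => ne_of_gt (hy j).1)
  have hsc := entG_strictConcave R C
  refine ⟨hsc, Z, hZmem, ?_, hZpos, ?_⟩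
  · -- strict maximality
    intro X hXmem hne
    by_contra hcon
    push_neg at hcon
    have heq : entG X = entG Z := le_antisymm (hdual X hXmem) hcon
    have hmid := hsc.2 hXmem hZmem hne (by norm_num : (0:ℝ) < 1/2)
      (by norm_num : (0:ℝ) < 1/2) (by norm_num : (1:ℝ)/2 + 1/2 = 1)
    have hmidmem : (1/2 : ℝ) • X + (1/2 : ℝ) • Z ∈ Pplus R C :=
      Pplus_convex R C hXmem hZmem (by norm_num) (by norm_num) (by norm_num)
    have := hdual _ hmidmem
    simp only [smul_eq_mul, heq] at hmid
    linarith
  · -- the value of alphaplus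
    have hleast : IsLeast {z | ∃ x' y', (∀ i, 0 < x' i ∧ x' i < 1) ∧ (∀ j, 0 < y' j ∧ y' j < 1)
        ∧ z = Fplus R C x' y'} (Fplus R C x y) := by
      constructor
      · exact ⟨x, y, hx, hy, rfl⟩
      · rintro z ⟨x', y', hx', hy', rfl⟩
        have hxy' : ∀ i j, x' i * y' j < 1 := by
          intro i j
          nlinarith [(hx' i).1, (hx' i).2, (hy' j).1, (hy' j).2]
        rw [Fplus_eq_exp R C x y (fun i => (hx i).1) (fun j => (hy j).1)
          (fun i j => (hxy i j).2)]
        rw [Fplus_eq_exp R C x' y' (fun i => (hx' i).1) (fun j => (hy' j).1) hxy']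
        exact Real.exp_le_exp.2 (hmin x' y' hx' hy')
    rw [alphaplus, hleast.csInf_eq, hval,
      Fplus_eq_exp R C x y (fun i => (hx i).1) (fun j => (hy j).1) (fun i j => (hxy i j).2)]
end
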